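/- arXiv:1306.3026 — 3 statements merged into one kernel-verified Lean document; each statement's English description precedes it below -/
import Mathlib

section
/- Let N, d ≥ 1 and for each proper subset I ⊊ {1,…,d} let ν_I : (ZMod N)^I → ℝ be a nonnegative function. Then: (a) for every f : (ZMod N)^d → ℝ the diagonal weighted Gowers inner product ⟨(f_ω)⟩_{□,ν} with f_ω = f for all ω is nonnegative; and (b) for every family of functions f_ω : (ZMod N)^d → ℝ (ω ∈ {0,1}^d), |⟨(f_ω)⟩_{□,ν}| ≤ ∏_{ω ∈ {0,1}^d} ‖f_ω‖_{□,ν} (Gowers–Cauchy–Schwarz inequality). -/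
noncomputable section
open Finset

/-- `P_ω(x,y)`: the point whose `i`-th coordinate is `x i` if `ω i = false` and `y i` otherwise. -/
def proj {ι : Type*} {N : ℕ} (ω : ι → Bool) (x y : ι → ZMod N) : ι → ZMod N :=
  fun i => if ω i then y i else x i

/-- `P_{ω_I}(x_I, y_I)` as a function on the subtype `↥I`. -/
def projI {ι : Type*} {N : ℕ} {I : Finset ι} (ω : I → Bool) (x y : ι → ZMod N) :
    I → ZMod N :=
  fun i => if ω i then y i.1 else x i.1

/-- The product of the weights `ν_I(P_{ω_I}(x_I,y_I))` over proper subsets `I ⊊ ι`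
and all `ω_I ∈ {0,1}^I`. -/
def weightProd {ι : Type*} [Fintype ι] [DecidableEq ι] {N : ℕ}
    (ν : (I : Finset ι) → (I → ZMod N) → ℝ) (x y : ι → ZMod N) : ℝ :=
  ∏ I ∈ univ.filter (fun I : Finset ι => I ≠ univ), ∏ ω : I → Bool, ν I (projI ω x y)

/-- The weighted Gowers inner product `⟨(f_ω)⟩_{□,ν}`. -/
def gowersInner {ι : Type*} [Fintype ι] [DecidableEq ι] {N : ℕ} [NeZero N]
    (ν : (I : Finset ι) → (I → ZMod N) → ℝ)
    (f : (ι → Bool) → (ι → ZMod N) → ℝ) : ℝ :=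
  Finset.expect Finset.univ fun x : ι → ZMod N =>
    Finset.expect Finset.univ fun y : ι → ZMod N =>
      (∏ ω : ι → Bool, f ω (proj ω x y)) * weightProd ν x y

/-- The weighted box norm `‖f‖_{□,ν}`. -/
def boxNorm {ι : Type*} [Fintype ι] [DecidableEq ι] {N : ℕ} [NeZero N]
    (ν : (I : Finset ι) → (I → ZMod N) → ℝ) (f : (ι → ZMod N) → ℝ) : ℝ :=
  gowersInner ν (fun _ => f) ^ (((2 : ℝ) ^ (Fintype.card ι))⁻¹)

variable {ι : Type*} [Fintype ι] [DecidableEq ι] {N : ℕ} [NeZero N]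

/-- sum version of the Gowers inner product -/
def GS (ν : (I : Finset ι) → (I → ZMod N) → ℝ)
    (f : (ι → Bool) → (ι → ZMod N) → ℝ) : ℝ :=
  ∑ x : ι → ZMod N, ∑ y : ι → ZMod N,
    (∏ ω : ι → Bool, f ω (proj ω x y)) * weightProd ν x y

lemma gowersInner_eq_GS (ν : (I : Finset ι) → (I → ZMod N) → ℝ) (f) :
    gowersInner ν f = GS ν f / (Fintype.card (ι → ZMod N) : ℝ) ^ 2 := by
  unfold gowersInner GS
  simp only [Finset.expect_eq_sum_div_card, card_univ, Finset.sum_div]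
  simp [div_div, sq]

def Ff (f : (ι → Bool) → (ι → ZMod N) → ℝ) (i : ι) (b : Bool) (x y : ι → ZMod N) : ℝ :=
  ∏ ω ∈ univ.filter (fun ω : ι → Bool => ω i = b), f ω (proj ω x y)

def Gw (ν : (I : Finset ι) → (I → ZMod N) → ℝ) (i : ι) (b : Bool) (x y : ι → ZMod N) : ℝ :=
  ∏ I ∈ univ.filter (fun I : Finset ι => I ≠ univ ∧ i ∈ I),
    ∏ ω ∈ univ.filter (fun ω : I → Bool => ∀ j : I, (j : ι) = i → ω j = b),
      ν I (projI ω x y)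

def Bw (ν : (I : Finset ι) → (I → ZMod N) → ℝ) (i : ι) (x y : ι → ZMod N) : ℝ :=
  ∏ I ∈ univ.filter (fun I : Finset ι => I ≠ univ ∧ i ∉ I),
    ∏ ω : I → Bool, ν I (projI ω x y)

def Kf (ν : (I : Finset ι) → (I → ZMod N) → ℝ) (f : (ι → Bool) → (ι → ZMod N) → ℝ) (i : ι) (b : Bool) (x y : ι → ZMod N) : ℝ :=
  Ff f i b x y * Gw ν i b x y

lemma split_f (f) (i : ι) (x y : ι → ZMod N) :
    (∏ ω : ι → Bool, f ω (proj ω x y)) = Ff f i false x y * Ff f i true x y := by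
  rw [Ff, Ff, ← Finset.prod_filter_mul_prod_filter_not univ (fun ω : ι → Bool => ω i = false)]
  congr 1
  apply Finset.prod_congr _ (fun _ _ => rfl)
  apply Finset.filter_congr
  intro ω _
  cases h : ω i <;> simp [h]

lemma split_w (ν : (I : Finset ι) → (I → ZMod N) → ℝ) (i : ι) (x y : ι → ZMod N) :
    weightProd ν x y = Gw ν i false x y * Gw ν i true x y * Bw ν i x y := by
  rw [weightProd, ← Finset.prod_filter_mul_prod_filter_not
      (univ.filter (fun I : Finset ι => I ≠ univ)) (fun I => i ∈ I), Finset.filter_filter,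
      Finset.filter_filter]
  rw [Gw, Gw, Bw, ← Finset.prod_mul_distrib]
  congr 1
  apply Finset.prod_congr rfl
  intro I hI
  have hiI : i ∈ I := (Finset.mem_filter.mp hI).2.2
  rw [← Finset.prod_filter_mul_prod_filter_not univ
      (fun ω : I → Bool => ∀ j : I, (j : ι) = i → ω j = false)]
  congr 1
  apply Finset.prod_congr _ (fun _ _ => rfl)
  apply Finset.filter_congr
  intro ω _
  constructor
  · intro hne j hj
    have hj' : j = (⟨i, hiI⟩ : I) := Subtype.ext hj
    subst hj'
    by_contra hb
    apply hne
    intro j' hj''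
    have : j' = (⟨i, hiI⟩ : I) := Subtype.ext hj''
    subst this
    revert hb
    cases h : ω (⟨i, hiI⟩ : I) <;> simp
  · intro hall hne
    have h1 := hall (⟨i, hiI⟩ : I) rfl
    have h2 := hne (⟨i, hiI⟩ : I) rfl
    rw [h1] at h2
    exact absurd h2 (by simp)

set_option linter.unusedSectionVars false

open Function in
lemma Ff_update_right (f) (i : ι) (x y : ι → ZMod N) (t : ZMod N) :
    Ff f i false x (update y i t) = Ff f i false x y := by
  apply Finset.prod_congr rfl
  intro ω hω
  have hb : ω i = false := (Finset.mem_filter.mp hω).2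
  congr 1
  funext j
  unfold proj
  rcases eq_or_ne j i with rfl | hj
  · rw [hb]; simp
  · rw [update_of_ne hj]

open Function in
lemma Ff_update_left (f) (i : ι) (x y : ι → ZMod N) (s : ZMod N) :
    Ff f i true (update x i s) y = Ff f i true x y := by
  apply Finset.prod_congr rfl
  intro ω hω
  have hb : ω i = true := (Finset.mem_filter.mp hω).2
  congr 1
  funext j
  unfold proj
  rcases eq_or_ne j i with rfl | hj
  · rw [hb]; simp
  · rw [update_of_ne hj]

open Function in
lemma Gw_update_right (ν : (I : Finset ι) → (I → ZMod N) → ℝ) (i : ι) (x y : ι → ZMod N)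
    (t : ZMod N) : Gw ν i false x (update y i t) = Gw ν i false x y := by
  apply Finset.prod_congr rfl
  intro I hI
  apply Finset.prod_congr rfl
  intro ω hω
  have hb : ∀ j : I, (j : ι) = i → ω j = false := (Finset.mem_filter.mp hω).2
  congr 1
  funext j
  unfold projI
  rcases eq_or_ne (j : ι) i with hj | hj
  · rw [hb j hj]; simp [hj]
  · cases ω j <;> simp [update_of_ne hj]

open Function in
lemma Gw_update_left (ν : (I : Finset ι) → (I → ZMod N) → ℝ) (i : ι) (x y : ι → ZMod N)
    (s : ZMod N) : Gw ν i true (update x i s) y = Gw ν i true x y := by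
  apply Finset.prod_congr rfl
  intro I hI
  apply Finset.prod_congr rfl
  intro ω hω
  have hb : ∀ j : I, (j : ι) = i → ω j = true := (Finset.mem_filter.mp hω).2
  congr 1
  funext j
  unfold projI
  rcases eq_or_ne (j : ι) i with hj | hj
  · rw [hb j hj]; simp [hj]
  · cases ω j <;> simp [update_of_ne hj]

open Function in
lemma Bw_update (ν : (I : Finset ι) → (I → ZMod N) → ℝ) (i : ι) (x y : ι → ZMod N)
    (s t : ZMod N) : Bw ν i (update x i s) (update y i t) = Bw ν i x y := by
  apply Finset.prod_congr rfl
  intro I hI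
  have hiI : i ∉ I := (Finset.mem_filter.mp hI).2.2
  apply Finset.prod_congr rfl
  intro ω _
  congr 1
  funext j
  have hj : (j : ι) ≠ i := fun h => hiI (h ▸ j.2)
  unfold projI
  cases ω j <;> simp [update_of_ne hj]

open Function in
lemma Kf_update_right (ν : (I : Finset ι) → (I → ZMod N) → ℝ) (f) (i : ι)
    (x y : ι → ZMod N) (t : ZMod N) :
    Kf ν f i false x (update y i t) = Kf ν f i false x y := by
  rw [Kf, Kf, Ff_update_right, Gw_update_right]

open Function in
lemma Kf_update_left (ν : (I : Finset ι) → (I → ZMod N) → ℝ) (f) (i : ι)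
    (x y : ι → ZMod N) (s : ZMod N) :
    Kf ν f i true (update x i s) y = Kf ν f i true x y := by
  rw [Kf, Kf, Ff_update_left, Gw_update_left]

open Function in
lemma Gw_swap (ν : (I : Finset ι) → (I → ZMod N) → ℝ) (i : ι) (x y : ι → ZMod N) :
    Gw ν i true x y = Gw ν i false (update x i (y i)) y := by
  apply Finset.prod_congr rfl
  intro I hI
  have hiI : i ∈ I := (Finset.mem_filter.mp hI).2.2
  set j₀ : I := ⟨i, hiI⟩ with hj₀
  refine Finset.prod_bij' (fun ω _ => update ω j₀ false) (fun ω _ => update ω j₀ true)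
    ?hi ?hj ?li ?ri ?val
  case hi =>
    intro ω hω
    simp only [Finset.mem_filter, Finset.mem_univ, true_and]
    intro j hj
    have : j = j₀ := Subtype.ext hj
    subst this
    exact update_self _ _ _
  case hj =>
    intro ω hω
    simp only [Finset.mem_filter, Finset.mem_univ, true_and]
    intro j hj
    have : j = j₀ := Subtype.ext hj
    subst this
    exact update_self _ _ _
  case li =>
    intro ω hω
    have hb : ω j₀ = true := (Finset.mem_filter.mp hω).2 j₀ rfl
    rw [update_idem, ← hb, update_eq_self]
  case ri =>
    intro ω hω
    have hb : ω j₀ = false := (Finset.mem_filter.mp hω).2 j₀ rfl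
    rw [update_idem, ← hb, update_eq_self]
  case val =>
    intro ω hω
    have hb : ω j₀ = true := (Finset.mem_filter.mp hω).2 j₀ rfl
    congr 1
    funext j
    unfold projI
    by_cases hj : j = j₀
    · subst hj
      rw [hb, update_self]
      simp [hj₀]
    · rw [update_of_ne hj]
      have hji : (j : ι) ≠ i := fun h => hj (Subtype.ext h)
      cases ω j <;> simp [update_of_ne hji]

open Function in
lemma Gw_swap' (ν : (I : Finset ι) → (I → ZMod N) → ℝ) (i : ι) (x y : ι → ZMod N) :
    Gw ν i false x y = Gw ν i true x (update y i (x i)) := by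
  apply Finset.prod_congr rfl
  intro I hI
  have hiI : i ∈ I := (Finset.mem_filter.mp hI).2.2
  set j₀ : I := ⟨i, hiI⟩ with hj₀
  refine Finset.prod_bij' (fun ω _ => update ω j₀ true) (fun ω _ => update ω j₀ false)
    ?hi ?hj ?li ?ri ?val
  case hi =>
    intro ω hω
    simp only [Finset.mem_filter, Finset.mem_univ, true_and]
    intro j hj
    have : j = j₀ := Subtype.ext hj
    subst this
    exact update_self _ _ _
  case hj =>
    intro ω hω
    simp only [Finset.mem_filter, Finset.mem_univ, true_and]
    intro j hj
    have : j = j₀ := Subtype.ext hj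
    subst this
    exact update_self _ _ _
  case li =>
    intro ω hω
    have hb : ω j₀ = false := (Finset.mem_filter.mp hω).2 j₀ rfl
    rw [update_idem, ← hb, update_eq_self]
  case ri =>
    intro ω hω
    have hb : ω j₀ = true := (Finset.mem_filter.mp hω).2 j₀ rfl
    rw [update_idem, ← hb, update_eq_self]
  case val =>
    intro ω hω
    have hb : ω j₀ = false := (Finset.mem_filter.mp hω).2 j₀ rfl
    congr 1
    funext j
    unfold projI
    by_cases hj : j = j₀
    · subst hj
      rw [hb, update_self]
      simp [hj₀]
    · rw [update_of_ne hj]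
      have hji : (j : ι) ≠ i := fun h => hj (Subtype.ext h)
      cases ω j <;> simp [update_of_ne hji]

open Function in
lemma Ffg_id_false (f : (ι → Bool) → (ι → ZMod N) → ℝ) (i : ι) (x y : ι → ZMod N) :
    (∏ ω ∈ univ.filter (fun ω : ι → Bool => ω i = false),
      f (update ω i false) (proj ω x y)) = Ff f i false x y := by
  apply Finset.prod_congr rfl
  intro ω hω
  have hb : ω i = false := (Finset.mem_filter.mp hω).2
  rw [← hb, update_eq_self]

open Function in
lemma Ffg_id_true (f : (ι → Bool) → (ι → ZMod N) → ℝ) (i : ι) (x y : ι → ZMod N) :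
    (∏ ω ∈ univ.filter (fun ω : ι → Bool => ω i = true),
      f (update ω i true) (proj ω x y)) = Ff f i true x y := by
  apply Finset.prod_congr rfl
  intro ω hω
  have hb : ω i = true := (Finset.mem_filter.mp hω).2
  rw [← hb, update_eq_self]

open Function in
lemma Ffg_swap_false (f : (ι → Bool) → (ι → ZMod N) → ℝ) (i : ι) (x y : ι → ZMod N) :
    (∏ ω ∈ univ.filter (fun ω : ι → Bool => ω i = true),
      f (update ω i false) (proj ω x y)) = Ff f i false (update x i (y i)) y := by
  refine Finset.prod_bij' (fun ω _ => update ω i false) (fun ω _ => update ω i true)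
    ?hi ?hj ?li ?ri ?val
  case hi =>
    intro ω hω
    simp
  case hj =>
    intro ω hω
    simp
  case li =>
    intro ω hω
    have hb : ω i = true := (Finset.mem_filter.mp hω).2
    rw [update_idem, ← hb, update_eq_self]
  case ri =>
    intro ω hω
    have hb : ω i = false := (Finset.mem_filter.mp hω).2
    rw [update_idem, ← hb, update_eq_self]
  case val =>
    intro ω hω
    have hb : ω i = true := (Finset.mem_filter.mp hω).2
    congr 1
    funext j
    unfold proj
    by_cases hj : j = i
    · subst hj
      rw [hb, update_self, update_self]
      simp
    · rw [update_of_ne hj]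
      cases hc : ω j <;> simp [hc, update_of_ne hj]

open Function in
lemma Ffg_swap_true (f : (ι → Bool) → (ι → ZMod N) → ℝ) (i : ι) (x y : ι → ZMod N) :
    (∏ ω ∈ univ.filter (fun ω : ι → Bool => ω i = false),
      f (update ω i true) (proj ω x y)) = Ff f i true x (update y i (x i)) := by
  refine Finset.prod_bij' (fun ω _ => update ω i true) (fun ω _ => update ω i false)
    ?hi ?hj ?li ?ri ?val
  case hi =>
    intro ω hω
    simp
  case hj =>
    intro ω hω
    simp
  case li =>
    intro ω hω
    have hb : ω i = false := (Finset.mem_filter.mp hω).2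
    rw [update_idem, ← hb, update_eq_self]
  case ri =>
    intro ω hω
    have hb : ω i = true := (Finset.mem_filter.mp hω).2
    rw [update_idem, ← hb, update_eq_self]
  case val =>
    intro ω hω
    have hb : ω i = false := (Finset.mem_filter.mp hω).2
    congr 1
    funext j
    unfold proj
    by_cases hj : j = i
    · subst hj
      rw [hb, update_self, update_self]
      simp
    · rw [update_of_ne hj]
      cases hc : ω j <;> simp [hc, update_of_ne hj]

open Function in
lemma sum_update (i : ι) (h : (ι → ZMod N) → ℝ) :
    ∑ s : ZMod N, ∑ x : ι → ZMod N, h (update x i s) = (N : ℝ) * ∑ x : ι → ZMod N, h x := by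
  have hinv : Function.Involutive
      (fun p : ZMod N × (ι → ZMod N) => (p.2 i, update p.2 i p.1)) := by
    intro p
    simp [update_idem, update_eq_self]
  calc ∑ s : ZMod N, ∑ x : ι → ZMod N, h (update x i s)
      = ∑ p : ZMod N × (ι → ZMod N), h (update p.2 i p.1) :=
        (Fintype.sum_prod_type (fun p : ZMod N × (ι → ZMod N) => h (update p.2 i p.1))).symm
    _ = ∑ p : ZMod N × (ι → ZMod N),
        h (((fun p : ZMod N × (ι → ZMod N) => (p.2 i, update p.2 i p.1)) p).2) := rfl
    _ = ∑ p : ZMod N × (ι → ZMod N), h p.2 :=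
        Equiv.sum_comp (hinv.toPerm _) (fun p => h p.2)
    _ = ∑ _s : ZMod N, ∑ x : ι → ZMod N, h x :=
        Fintype.sum_prod_type (fun p : ZMod N × (ι → ZMod N) => h p.2)
    _ = (N : ℝ) * ∑ x : ι → ZMod N, h x := by
        rw [Finset.sum_const, card_univ, ZMod.card, nsmul_eq_mul]

open Function

lemma sum_sum_factor {α β : Type*} [Fintype α] [Fintype β] (a : α → ℝ) (b : β → ℝ) (c : ℝ) :
    ∑ s : α, ∑ t : β, a s * b t * c = c * ((∑ s : α, a s) * (∑ t : β, b t)) := by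
  rw [Finset.sum_mul_sum, Finset.mul_sum]
  apply Finset.sum_congr rfl
  intro s _
  rw [Finset.mul_sum]
  apply Finset.sum_congr rfl
  intro t _
  ring

lemma GS_eq_K (ν : (I : Finset ι) → (I → ZMod N) → ℝ) (f) (i : ι) :
    GS ν f = ∑ x : ι → ZMod N, ∑ y : ι → ZMod N,
      Kf ν f i false x y * Kf ν f i true x y * Bw ν i x y := by
  apply Finset.sum_congr rfl
  intro x _
  apply Finset.sum_congr rfl
  intro y _
  rw [split_f f i x y, split_w ν i x y, Kf, Kf]
  ring

lemma GS_diag_false (ν : (I : Finset ι) → (I → ZMod N) → ℝ) (f) (i : ι) :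
    GS ν (fun ω => f (update ω i false)) = ∑ x : ι → ZMod N, ∑ y : ι → ZMod N,
      Kf ν f i false x y * Kf ν f i false (update x i (y i)) y * Bw ν i x y := by
  apply Finset.sum_congr rfl
  intro x _
  apply Finset.sum_congr rfl
  intro y _
  rw [split_f (fun ω => f (update ω i false)) i x y, split_w ν i x y]
  have e1 : Ff (fun ω => f (update ω i false)) i false x y = Ff f i false x y :=
    Ffg_id_false f i x y
  have e2 : Ff (fun ω => f (update ω i false)) i true x y
      = Ff f i false (update x i (y i)) y := Ffg_swap_false f i x y
  rw [e1, e2, Gw_swap ν i x y, Kf, Kf]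
  ring

lemma GS_diag_true (ν : (I : Finset ι) → (I → ZMod N) → ℝ) (f) (i : ι) :
    GS ν (fun ω => f (update ω i true)) = ∑ x : ι → ZMod N, ∑ y : ι → ZMod N,
      Kf ν f i true x y * Kf ν f i true x (update y i (x i)) * Bw ν i x y := by
  apply Finset.sum_congr rfl
  intro x _
  apply Finset.sum_congr rfl
  intro y _
  rw [split_f (fun ω => f (update ω i true)) i x y, split_w ν i x y]
  have e1 : Ff (fun ω => f (update ω i true)) i true x y = Ff f i true x y :=
    Ffg_id_true f i x y
  have e2 : Ff (fun ω => f (update ω i true)) i false x y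
      = Ff f i true x (update y i (x i)) := Ffg_swap_true f i x y
  rw [e1, e2, Gw_swap' ν i x y, Kf, Kf]
  ring

/-- generic reparametrization: `N^2 * ∑∑ T = ∑∑∑∑ T (x[i:=s]) (y[i:=t])`. -/
lemma reparam (i : ι) (T : (ι → ZMod N) → (ι → ZMod N) → ℝ) :
    (N : ℝ) ^ 2 * ∑ x : ι → ZMod N, ∑ y : ι → ZMod N, T x y
      = ∑ x : ι → ZMod N, ∑ y : ι → ZMod N, ∑ s : ZMod N, ∑ t : ZMod N,
          T (update x i s) (update y i t) := by
  have step1 : (N : ℝ) ^ 2 * ∑ x : ι → ZMod N, ∑ y : ι → ZMod N, T x y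
      = (N : ℝ) * ∑ s : ZMod N, ∑ x : ι → ZMod N, ∑ y : ι → ZMod N, T (update x i s) y := by
    rw [sum_update i (fun x => ∑ y : ι → ZMod N, T x y)]
    ring
  rw [step1, Finset.mul_sum]
  have step2 : ∀ s : ZMod N,
      (N : ℝ) * ∑ x : ι → ZMod N, ∑ y : ι → ZMod N, T (update x i s) y
        = ∑ x : ι → ZMod N, ∑ t : ZMod N, ∑ y : ι → ZMod N, T (update x i s) (update y i t) := by
    intro s
    rw [Finset.mul_sum]
    apply Finset.sum_congr rfl
    intro x _
    rw [sum_update i (fun y => T (update x i s) y)]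
  calc ∑ s : ZMod N, (N:ℝ) * ∑ x : ι → ZMod N, ∑ y : ι → ZMod N, T (update x i s) y
      = ∑ s : ZMod N, ∑ x : ι → ZMod N, ∑ t : ZMod N, ∑ y : ι → ZMod N,
          T (update x i s) (update y i t) := Finset.sum_congr rfl (fun s _ => step2 s)
    _ = ∑ x : ι → ZMod N, ∑ s : ZMod N, ∑ t : ZMod N, ∑ y : ι → ZMod N,
          T (update x i s) (update y i t) := Finset.sum_comm
    _ = ∑ x : ι → ZMod N, ∑ y : ι → ZMod N, ∑ s : ZMod N, ∑ t : ZMod N,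
          T (update x i s) (update y i t) := by
        apply Finset.sum_congr rfl
        intro x _
        calc ∑ s : ZMod N, ∑ t : ZMod N, ∑ y : ι → ZMod N, T (update x i s) (update y i t)
            = ∑ s : ZMod N, ∑ y : ι → ZMod N, ∑ t : ZMod N, T (update x i s) (update y i t) :=
              Finset.sum_congr rfl (fun s _ => Finset.sum_comm)
          _ = ∑ y : ι → ZMod N, ∑ s : ZMod N, ∑ t : ZMod N, T (update x i s) (update y i t) :=
              Finset.sum_comm

def Psi0 (ν : (I : Finset ι) → (I → ZMod N) → ℝ) (f : (ι → Bool) → (ι → ZMod N) → ℝ) (i : ι) (x y : ι → ZMod N) : ℝ :=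
  ∑ s : ZMod N, Kf ν f i false (update x i s) y

def Psi1 (ν : (I : Finset ι) → (I → ZMod N) → ℝ) (f : (ι → Bool) → (ι → ZMod N) → ℝ) (i : ι) (x y : ι → ZMod N) : ℝ :=
  ∑ t : ZMod N, Kf ν f i true x (update y i t)

lemma N2_GS (ν : (I : Finset ι) → (I → ZMod N) → ℝ) (f) (i : ι) :
    (N : ℝ) ^ 2 * GS ν f = ∑ x : ι → ZMod N, ∑ y : ι → ZMod N,
      Psi0 ν f i x y * Psi1 ν f i x y * Bw ν i x y := by
  rw [GS_eq_K ν f i, reparam i]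
  apply Finset.sum_congr rfl
  intro x _
  apply Finset.sum_congr rfl
  intro y _
  have ptw : ∀ s t : ZMod N,
      Kf ν f i false (update x i s) (update y i t) * Kf ν f i true (update x i s) (update y i t)
        * Bw ν i (update x i s) (update y i t)
      = Kf ν f i false (update x i s) y * Kf ν f i true x (update y i t) * Bw ν i x y := by
    intro s t
    rw [Kf_update_right, Kf_update_left, Bw_update]
  calc ∑ s : ZMod N, ∑ t : ZMod N,
        Kf ν f i false (update x i s) (update y i t) * Kf ν f i true (update x i s) (update y i t)
          * Bw ν i (update x i s) (update y i t)
      = ∑ s : ZMod N, ∑ t : ZMod N,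
        Kf ν f i false (update x i s) y * Kf ν f i true x (update y i t) * Bw ν i x y :=
        Finset.sum_congr rfl (fun s _ => Finset.sum_congr rfl (fun t _ => ptw s t))
    _ = Bw ν i x y * (Psi0 ν f i x y * Psi1 ν f i x y) :=
        sum_sum_factor _ _ _
    _ = Psi0 ν f i x y * Psi1 ν f i x y * Bw ν i x y := by ring

lemma N2_GS_diag_false (ν : (I : Finset ι) → (I → ZMod N) → ℝ) (f) (i : ι) :
    (N : ℝ) ^ 2 * GS ν (fun ω => f (update ω i false))
      = ∑ x : ι → ZMod N, ∑ y : ι → ZMod N,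
          Psi0 ν f i x y * Psi0 ν f i x y * Bw ν i x y := by
  rw [GS_diag_false ν f i, reparam i]
  apply Finset.sum_congr rfl
  intro x _
  apply Finset.sum_congr rfl
  intro y _
  have ptw : ∀ s t : ZMod N,
      Kf ν f i false (update x i s) (update y i t)
        * Kf ν f i false (update (update x i s) i (update y i t i)) (update y i t)
        * Bw ν i (update x i s) (update y i t)
      = Kf ν f i false (update x i s) y * Kf ν f i false (update x i t) y * Bw ν i x y := by
    intro s t
    rw [update_self, update_idem, Kf_update_right, Kf_update_right, Bw_update]
  calc ∑ s : ZMod N, ∑ t : ZMod N,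
        Kf ν f i false (update x i s) (update y i t)
          * Kf ν f i false (update (update x i s) i (update y i t i)) (update y i t)
          * Bw ν i (update x i s) (update y i t)
      = ∑ s : ZMod N, ∑ t : ZMod N,
        Kf ν f i false (update x i s) y * Kf ν f i false (update x i t) y * Bw ν i x y :=
        Finset.sum_congr rfl (fun s _ => Finset.sum_congr rfl (fun t _ => ptw s t))
    _ = Bw ν i x y * (Psi0 ν f i x y * Psi0 ν f i x y) := sum_sum_factor _ _ _
    _ = Psi0 ν f i x y * Psi0 ν f i x y * Bw ν i x y := by ring

lemma N2_GS_diag_true (ν : (I : Finset ι) → (I → ZMod N) → ℝ) (f) (i : ι) :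
    (N : ℝ) ^ 2 * GS ν (fun ω => f (update ω i true))
      = ∑ x : ι → ZMod N, ∑ y : ι → ZMod N,
          Psi1 ν f i x y * Psi1 ν f i x y * Bw ν i x y := by
  rw [GS_diag_true ν f i, reparam i]
  apply Finset.sum_congr rfl
  intro x _
  apply Finset.sum_congr rfl
  intro y _
  have ptw : ∀ s t : ZMod N,
      Kf ν f i true (update x i s) (update y i t)
        * Kf ν f i true (update x i s) (update (update y i t) i (update x i s i))
        * Bw ν i (update x i s) (update y i t)
      = Kf ν f i true x (update y i t) * Kf ν f i true x (update y i s) * Bw ν i x y := by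
    intro s t
    rw [update_self, update_idem, Kf_update_left, Kf_update_left, Bw_update]
  calc ∑ s : ZMod N, ∑ t : ZMod N,
        Kf ν f i true (update x i s) (update y i t)
          * Kf ν f i true (update x i s) (update (update y i t) i (update x i s i))
          * Bw ν i (update x i s) (update y i t)
      = ∑ s : ZMod N, ∑ t : ZMod N,
        Kf ν f i true x (update y i t) * Kf ν f i true x (update y i s) * Bw ν i x y :=
        Finset.sum_congr rfl (fun s _ => Finset.sum_congr rfl (fun t _ => ptw s t))
    _ = ∑ s : ZMod N, ∑ t : ZMod N,
        Kf ν f i true x (update y i s) * Kf ν f i true x (update y i t) * Bw ν i x y :=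
        Finset.sum_congr rfl (fun s _ => Finset.sum_congr rfl (fun t _ => by ring))
    _ = Bw ν i x y * (Psi1 ν f i x y * Psi1 ν f i x y) := sum_sum_factor _ _ _
    _ = Psi1 ν f i x y * Psi1 ν f i x y * Bw ν i x y := by ring

lemma Bw_nonneg (ν : (I : Finset ι) → (I → ZMod N) → ℝ)
    (hν : ∀ I : Finset ι, I ≠ univ → ∀ z, 0 ≤ ν I z) (i : ι) (x y : ι → ZMod N) :
    0 ≤ Bw ν i x y := by
  apply Finset.prod_nonneg
  intro I hI
  exact Finset.prod_nonneg fun ω _ => hν I (Finset.mem_filter.mp hI).2.1 _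

lemma GS_step (ν : (I : Finset ι) → (I → ZMod N) → ℝ)
    (hν : ∀ I : Finset ι, I ≠ univ → ∀ z, 0 ≤ ν I z) (i : ι)
    (f : (ι → Bool) → (ι → ZMod N) → ℝ) :
    0 ≤ GS ν (fun ω => f (update ω i false)) ∧
    0 ≤ GS ν (fun ω => f (update ω i true)) ∧
    (GS ν f) ^ 2 ≤ GS ν (fun ω => f (update ω i false)) * GS ν (fun ω => f (update ω i true)) := by
  have hNpos : (0 : ℝ) < (N : ℝ) ^ 2 := by
    have := NeZero.ne N
    positivity
  have hB : ∀ x y, 0 ≤ Bw ν i x y := Bw_nonneg ν hν i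
  -- single-sum versions over the product type
  let V := (ι → ZMod N) × (ι → ZMod N)
  have e : (N : ℝ) ^ 2 * GS ν f
      = ∑ p : V, Psi0 ν f i p.1 p.2 * Psi1 ν f i p.1 p.2 * Bw ν i p.1 p.2 := by
    rw [N2_GS ν f i]
    exact (Fintype.sum_prod_type'
      (fun a b => Psi0 ν f i a b * Psi1 ν f i a b * Bw ν i a b)).symm
  have e0 : (N : ℝ) ^ 2 * GS ν (fun ω => f (update ω i false))
      = ∑ p : V, Psi0 ν f i p.1 p.2 * Psi0 ν f i p.1 p.2 * Bw ν i p.1 p.2 := by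
    rw [N2_GS_diag_false ν f i]
    exact (Fintype.sum_prod_type'
      (fun a b => Psi0 ν f i a b * Psi0 ν f i a b * Bw ν i a b)).symm
  have e1 : (N : ℝ) ^ 2 * GS ν (fun ω => f (update ω i true))
      = ∑ p : V, Psi1 ν f i p.1 p.2 * Psi1 ν f i p.1 p.2 * Bw ν i p.1 p.2 := by
    rw [N2_GS_diag_true ν f i]
    exact (Fintype.sum_prod_type'
      (fun a b => Psi1 ν f i a b * Psi1 ν f i a b * Bw ν i a b)).symm
  have h0 : 0 ≤ GS ν (fun ω => f (update ω i false)) := by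
    have : 0 ≤ (N : ℝ) ^ 2 * GS ν (fun ω => f (update ω i false)) := by
      rw [e0]
      apply Finset.sum_nonneg
      intro p _
      exact mul_nonneg (mul_self_nonneg _) (hB _ _)
    exact nonneg_of_mul_nonneg_right this hNpos
  have h1 : 0 ≤ GS ν (fun ω => f (update ω i true)) := by
    have : 0 ≤ (N : ℝ) ^ 2 * GS ν (fun ω => f (update ω i true)) := by
      rw [e1]
      apply Finset.sum_nonneg
      intro p _
      exact mul_nonneg (mul_self_nonneg _) (hB _ _)
    exact nonneg_of_mul_nonneg_right this hNpos
  refine ⟨h0, h1, ?_⟩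
  -- Cauchy–Schwarz
  have key : ((N : ℝ) ^ 2 * GS ν f) ^ 2
      ≤ ((N : ℝ) ^ 2 * GS ν (fun ω => f (update ω i false)))
        * ((N : ℝ) ^ 2 * GS ν (fun ω => f (update ω i true))) := by
    rw [e, e0, e1]
    have hcs := Finset.sum_mul_sq_le_sq_mul_sq Finset.univ
      (fun p : V => Real.sqrt (Bw ν i p.1 p.2) * Psi0 ν f i p.1 p.2)
      (fun p : V => Real.sqrt (Bw ν i p.1 p.2) * Psi1 ν f i p.1 p.2)
    have l1 : ∀ p : V,
        (Real.sqrt (Bw ν i p.1 p.2) * Psi0 ν f i p.1 p.2)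
          * (Real.sqrt (Bw ν i p.1 p.2) * Psi1 ν f i p.1 p.2)
        = Psi0 ν f i p.1 p.2 * Psi1 ν f i p.1 p.2 * Bw ν i p.1 p.2 := by
      intro p
      have : Real.sqrt (Bw ν i p.1 p.2) * Real.sqrt (Bw ν i p.1 p.2) = Bw ν i p.1 p.2 :=
        Real.mul_self_sqrt (hB _ _)
      calc (Real.sqrt (Bw ν i p.1 p.2) * Psi0 ν f i p.1 p.2)
            * (Real.sqrt (Bw ν i p.1 p.2) * Psi1 ν f i p.1 p.2)
          = (Real.sqrt (Bw ν i p.1 p.2) * Real.sqrt (Bw ν i p.1 p.2))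
            * (Psi0 ν f i p.1 p.2 * Psi1 ν f i p.1 p.2) := by ring
        _ = _ := by rw [this]; ring
    have l2 : ∀ p : V,
        (Real.sqrt (Bw ν i p.1 p.2) * Psi0 ν f i p.1 p.2) ^ 2
        = Psi0 ν f i p.1 p.2 * Psi0 ν f i p.1 p.2 * Bw ν i p.1 p.2 := by
      intro p
      have : Real.sqrt (Bw ν i p.1 p.2) * Real.sqrt (Bw ν i p.1 p.2) = Bw ν i p.1 p.2 :=
        Real.mul_self_sqrt (hB _ _)
      calc (Real.sqrt (Bw ν i p.1 p.2) * Psi0 ν f i p.1 p.2) ^ 2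
          = (Real.sqrt (Bw ν i p.1 p.2) * Real.sqrt (Bw ν i p.1 p.2))
            * (Psi0 ν f i p.1 p.2 * Psi0 ν f i p.1 p.2) := by ring
        _ = _ := by rw [this]; ring
    have l3 : ∀ p : V,
        (Real.sqrt (Bw ν i p.1 p.2) * Psi1 ν f i p.1 p.2) ^ 2
        = Psi1 ν f i p.1 p.2 * Psi1 ν f i p.1 p.2 * Bw ν i p.1 p.2 := by
      intro p
      have : Real.sqrt (Bw ν i p.1 p.2) * Real.sqrt (Bw ν i p.1 p.2) = Bw ν i p.1 p.2 :=
        Real.mul_self_sqrt (hB _ _)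
      calc (Real.sqrt (Bw ν i p.1 p.2) * Psi1 ν f i p.1 p.2) ^ 2
          = (Real.sqrt (Bw ν i p.1 p.2) * Real.sqrt (Bw ν i p.1 p.2))
            * (Psi1 ν f i p.1 p.2 * Psi1 ν f i p.1 p.2) := by ring
        _ = _ := by rw [this]; ring
    rw [Finset.sum_congr rfl (fun p _ => l1 p)] at hcs
    rw [Finset.sum_congr rfl (fun p _ => l2 p)] at hcs
    rw [Finset.sum_congr rfl (fun p _ => l3 p)] at hcs
    exact hcs
  have expand : ((N : ℝ) ^ 2 * GS ν f) ^ 2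
      = ((N : ℝ) ^ 2) ^ 2 * (GS ν f) ^ 2 := by ring
  have expand2 : ((N : ℝ) ^ 2 * GS ν (fun ω => f (update ω i false)))
        * ((N : ℝ) ^ 2 * GS ν (fun ω => f (update ω i true)))
      = ((N : ℝ) ^ 2) ^ 2 * (GS ν (fun ω => f (update ω i false))
        * GS ν (fun ω => f (update ω i true))) := by ring
  rw [expand, expand2] at key
  exact le_of_mul_le_mul_left key (by positivity)

lemma card_fun_pos : (0 : ℝ) < (Fintype.card (ι → ZMod N) : ℝ) := by
  have : 0 < Fintype.card (ι → ZMod N) := Fintype.card_pos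
  exact_mod_cast this

lemma gowers_step (ν : (I : Finset ι) → (I → ZMod N) → ℝ)
    (hν : ∀ I : Finset ι, I ≠ univ → ∀ z, 0 ≤ ν I z) (i : ι)
    (f : (ι → Bool) → (ι → ZMod N) → ℝ) :
    0 ≤ gowersInner ν (fun ω => f (update ω i false)) ∧
    0 ≤ gowersInner ν (fun ω => f (update ω i true)) ∧
    (gowersInner ν f) ^ 2 ≤ gowersInner ν (fun ω => f (update ω i false))
      * gowersInner ν (fun ω => f (update ω i true)) := by
  obtain ⟨h0, h1, h2⟩ := GS_step ν hν i f
  have hcc : (0 : ℝ) < (Fintype.card (ι → ZMod N) : ℝ) := card_fun_pos (ι := ι) (N := N)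
  have hc : (0 : ℝ) < ((Fintype.card (ι → ZMod N) : ℝ)) ^ 2 := by positivity
  refine ⟨?_, ?_, ?_⟩
  · rw [gowersInner_eq_GS]
    exact div_nonneg h0 hc.le
  · rw [gowersInner_eq_GS]
    exact div_nonneg h1 hc.le
  · rw [gowersInner_eq_GS, gowersInner_eq_GS, gowersInner_eq_GS, div_pow, div_mul_div_comm,
      pow_two (((Fintype.card (ι → ZMod N) : ℝ)) ^ 2)]
    exact (div_le_div_iff_of_pos_right (mul_pos hc hc)).mpr h2

def clp (f : (ι → Bool) → (ι → ZMod N) → ℝ) (s : Finset ι) (τ : s → Bool) :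
    (ι → Bool) → (ι → ZMod N) → ℝ :=
  fun ω => f (fun j => if h : j ∈ s then τ ⟨j, h⟩ else ω j)

lemma clp_insensitive (f : (ι → Bool) → (ι → ZMod N) → ℝ) (s : Finset ι) (τ : s → Bool)
    {i : ι} (hi : i ∈ s) (b : Bool) :
    clp f s τ = fun ω => clp f s τ (update ω i b) := by
  funext ω
  unfold clp
  have harg : (fun j => if h : j ∈ s then τ ⟨j, h⟩ else update ω i b j)
      = (fun j => if h : j ∈ s then τ ⟨j, h⟩ else ω j) := by
    funext j
    by_cases h : j ∈ s
    · rw [dif_pos h, dif_pos h]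
    · have hji : j ≠ i := fun e => h (e ▸ hi)
      rw [dif_neg h, dif_neg h, update_of_ne hji]
  rw [harg]

lemma clp_nonneg (ν : (I : Finset ι) → (I → ZMod N) → ℝ)
    (hν : ∀ I : Finset ι, I ≠ univ → ∀ z, 0 ≤ ν I z)
    (f : (ι → Bool) → (ι → ZMod N) → ℝ) (s : Finset ι) (hs : s.Nonempty) (τ : s → Bool) :
    0 ≤ gowersInner ν (clp f s τ) := by
  obtain ⟨i, hi⟩ := hs
  rw [clp_insensitive f s τ hi false]
  exact (gowers_step ν hν i (clp f s τ)).1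

def extFun {α : Type*} [DecidableEq α] {s : Finset α} {a : α} (ha : a ∉ s)
    (τ : s → Bool) (b : Bool) : ↥(Finset.cons a s ha) → Bool :=
  fun j => if hj : (j : α) ∈ s then τ ⟨j, hj⟩ else b

def extEquiv {α : Type*} [DecidableEq α] {s : Finset α} {a : α} (ha : a ∉ s) :
    ((s → Bool) × Bool) ≃ (↥(Finset.cons a s ha) → Bool) where
  toFun p := extFun ha p.1 p.2
  invFun τ' := (fun j => τ' ⟨j.1, Finset.subset_cons ha j.2⟩,
    τ' ⟨a, Finset.mem_cons_self a s⟩)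
  left_inv p := by
    apply Prod.ext
    · funext j
      show extFun ha p.1 p.2 _ = _
      unfold extFun
      rw [dif_pos j.2]
    · show extFun ha p.1 p.2 _ = _
      unfold extFun
      rw [dif_neg ha]
  right_inv τ' := by
    funext j
    show extFun ha _ _ j = τ' j
    unfold extFun
    by_cases hj : (j : α) ∈ s
    · rw [dif_pos hj]
    · rw [dif_neg hj]
      have hja : (j : α) = a := by
        rcases Finset.mem_cons.mp j.2 with h | h
        · exact h
        · exact absurd h hj
      exact congrArg τ' (Subtype.ext hja.symm)

lemma gowers_claim (ν : (I : Finset ι) → (I → ZMod N) → ℝ)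
    (hν : ∀ I : Finset ι, I ≠ univ → ∀ z, 0 ≤ ν I z) (s : Finset ι) (hs : s.Nonempty) :
    ∀ f : (ι → Bool) → (ι → ZMod N) → ℝ,
      |gowersInner ν f| ^ (2 ^ s.card) ≤ ∏ τ : s → Bool, gowersInner ν (clp f s τ) := by
  induction hs using Finset.Nonempty.cons_induction with
  | singleton a =>
    intro f
    have hclp : ∀ b : Bool, clp f {a} (fun _ => b) = fun ω => f (update ω a b) := by
      intro b
      funext ω
      show f _ = f _
      apply congrArg f
      funext j
      by_cases h : j ∈ ({a} : Finset ι)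
      · rw [dif_pos h]
        have hja : j = a := Finset.mem_singleton.mp h
        subst hja
        rw [update_self]
      · have hja : j ≠ a := fun e => h (by simp [e])
        rw [dif_neg h, update_of_ne hja]
    let E : Bool ≃ (({a} : Finset ι) → Bool) :=
      { toFun := fun b => fun _ => b
        invFun := fun τ => τ ⟨a, Finset.mem_singleton_self a⟩
        left_inv := fun b => rfl
        right_inv := fun τ => by
          funext j
          exact congrArg τ (Subtype.ext (Finset.mem_singleton.mp j.2).symm) }
    have hprod : ∏ τ : ({a} : Finset ι) → Bool, gowersInner ν (clp f {a} τ)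
        = ∏ b : Bool, gowersInner ν (clp f {a} (fun _ => b)) :=
      (Fintype.prod_equiv E (fun b => gowersInner ν (clp f {a} (fun _ => b)))
        (fun τ => gowersInner ν (clp f {a} τ)) (fun b => rfl)).symm
    rw [hprod, Fintype.prod_bool, Finset.card_singleton, pow_one, sq_abs,
      hclp true, hclp false, mul_comm]
    exact (gowers_step ν hν a f).2.2
  | cons a s ha hs IH =>
    intro f
    rw [Finset.card_cons, pow_succ, pow_mul]
    have h1 : (|gowersInner ν f| ^ 2 ^ s.card) ^ 2
        ≤ (∏ τ : s → Bool, gowersInner ν (clp f s τ)) ^ 2 :=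
      pow_le_pow_left₀ (pow_nonneg (abs_nonneg _) _) (IH f) 2
    refine h1.trans ?_
    rw [← Finset.prod_pow]
    have key : ∀ (τ : s → Bool) (b : Bool),
        (fun ω => clp f s τ (update ω a b)) = clp f (Finset.cons a s ha) (extFun ha τ b) := by
      intro τ b
      funext ω
      show f _ = f _
      apply congrArg f
      funext j
      by_cases hj : j ∈ s
      · have hj' : j ∈ Finset.cons a s ha := Finset.subset_cons ha hj
        rw [dif_pos hj, dif_pos hj']
        show τ ⟨j, hj⟩ = extFun ha τ b ⟨j, hj'⟩
        unfold extFun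
        rw [dif_pos hj]
      · by_cases hja : j = a
        · subst hja
          rw [dif_neg hj, update_self, dif_pos (Finset.mem_cons_self j s)]
          show b = extFun ha τ b ⟨j, Finset.mem_cons_self j s⟩
          unfold extFun
          rw [dif_neg hj]
        · have hnc : j ∉ Finset.cons a s ha := by
            rw [Finset.mem_cons]
            push_neg
            exact ⟨hja, hj⟩
          rw [dif_neg hj, update_of_ne hja, dif_neg hnc]
    have step2 : ∀ τ : s → Bool, (gowersInner ν (clp f s τ)) ^ 2
        ≤ gowersInner ν (clp f (Finset.cons a s ha) (extFun ha τ false))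
          * gowersInner ν (clp f (Finset.cons a s ha) (extFun ha τ true)) := by
      intro τ
      have h := (gowers_step ν hν a (clp f s τ)).2.2
      rwa [key τ false, key τ true] at h
    calc ∏ τ : s → Bool, (gowersInner ν (clp f s τ)) ^ 2
        ≤ ∏ τ : s → Bool, (gowersInner ν (clp f (Finset.cons a s ha) (extFun ha τ false))
            * gowersInner ν (clp f (Finset.cons a s ha) (extFun ha τ true))) :=
          Finset.prod_le_prod (fun τ _ => sq_nonneg _) (fun τ _ => step2 τ)
      _ = ∏ τ : s → Bool, ∏ b : Bool,
            gowersInner ν (clp f (Finset.cons a s ha) (extFun ha τ b)) := by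
          apply Finset.prod_congr rfl
          intro τ _
          rw [Fintype.prod_bool, mul_comm]
      _ = ∏ p : (s → Bool) × Bool,
            gowersInner ν (clp f (Finset.cons a s ha) (extFun ha p.1 p.2)) :=
          (Fintype.prod_prod_type'
            (fun τ b => gowersInner ν (clp f (Finset.cons a s ha) (extFun ha τ b)))).symm
      _ = ∏ τ' : ↥(Finset.cons a s ha) → Bool,
            gowersInner ν (clp f (Finset.cons a s ha) τ') :=
          Fintype.prod_equiv (extEquiv ha)
            (fun p => gowersInner ν (clp f (Finset.cons a s ha) (extFun ha p.1 p.2)))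
            (fun τ' => gowersInner ν (clp f (Finset.cons a s ha) τ')) (fun p => rfl)

/-- (a) the diagonal weighted Gowers inner product is nonnegative;
(b) the Gowers–Cauchy–Schwarz inequality. -/
theorem gowers_nonneg_and_cauchy_schwarz (N d : ℕ) [NeZero N] (hd : 1 ≤ d)
    (ν : (I : Finset (Fin d)) → (I → ZMod N) → ℝ)
    (hν : ∀ I : Finset (Fin d), I ≠ univ → ∀ z, 0 ≤ ν I z) :
    (∀ f : (Fin d → ZMod N) → ℝ, 0 ≤ gowersInner ν (fun _ => f)) ∧
    (∀ f : (Fin d → Bool) → (Fin d → ZMod N) → ℝ,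
      |gowersInner ν f| ≤ ∏ ω : Fin d → Bool, boxNorm ν (f ω)) := by
  have i0 : Fin d := ⟨0, hd⟩
  have parta : ∀ f : (Fin d → ZMod N) → ℝ, 0 ≤ gowersInner ν (fun _ => f) := by
    intro f
    exact (gowers_step ν hν i0 (fun _ => f)).1
  refine ⟨parta, ?_⟩
  intro f
  have hNE : (univ : Finset (Fin d)).Nonempty := ⟨i0, mem_univ _⟩
  have hmain := gowers_claim ν hν univ hNE f
  simp only [card_univ, Fintype.card_fin] at hmain
  -- reindex the RHS of hmain
  let Eu : (Fin d → Bool) ≃ (↥(univ : Finset (Fin d)) → Bool) :=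
    { toFun := fun ω' j => ω' j.1
      invFun := fun τ j => τ ⟨j, mem_univ j⟩
      left_inv := fun ω' => rfl
      right_inv := fun τ => funext fun j => congrArg τ (Subtype.ext rfl) }
  have hre : ∏ τ : ↥(univ : Finset (Fin d)) → Bool, gowersInner ν (clp f univ τ)
      = ∏ ω' : Fin d → Bool, gowersInner ν (fun _ => f ω') := by
    refine (Fintype.prod_equiv Eu (fun ω' => gowersInner ν (fun _ => f ω'))
      (fun τ => gowersInner ν (clp f univ τ)) ?_).symm
    intro ω'
    apply congrArg (gowersInner ν)
    funext ω
    show f ω' = f _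
    apply congrArg f
    funext j
    rw [dif_pos (mem_univ j)]
    rfl
  rw [hre] at hmain
  set D : (Fin d → Bool) → ℝ := fun ω => gowersInner ν (fun _ => f ω) with hD
  have hDnn : ∀ ω, 0 ≤ D ω := fun ω => parta (f ω)
  have hbox : ∀ ω, boxNorm ν (f ω) = D ω ^ (((2 : ℝ) ^ (Fintype.card (Fin d)))⁻¹) :=
    fun ω => rfl
  have hPnn : 0 ≤ ∏ ω : Fin d → Bool, boxNorm ν (f ω) := by
    apply Finset.prod_nonneg
    intro ω _
    rw [hbox ω]
    exact Real.rpow_nonneg (hDnn ω) _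
  have hPpow : (∏ ω : Fin d → Bool, boxNorm ν (f ω)) ^ (2 ^ d : ℕ)
      = ∏ ω : Fin d → Bool, D ω := by
    rw [← Finset.prod_pow]
    apply Finset.prod_congr rfl
    intro ω _
    rw [hbox ω, ← Real.rpow_natCast (D ω ^ (((2 : ℝ) ^ (Fintype.card (Fin d)))⁻¹)) (2 ^ d),
      ← Real.rpow_mul (hDnn ω), Fintype.card_fin]
    have hexp : ((2 : ℝ) ^ d)⁻¹ * ((2 ^ d : ℕ) : ℝ) = 1 := by
      push_cast
      field_simp
    rw [hexp, Real.rpow_one]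
  have hfinal : |gowersInner ν f| ^ (2 ^ d : ℕ)
      ≤ (∏ ω : Fin d → Bool, boxNorm ν (f ω)) ^ (2 ^ d : ℕ) := by
    rw [hPpow]
    exact hmain
  have h2d : (2 : ℕ) ^ d ≠ 0 := pow_ne_zero d two_ne_zero
  exact (pow_le_pow_iff_left₀ (abs_nonneg _) hPnn h2d).mp hfinal

end
end

section
/- (Abstract transference decomposition.) For every d ≥ 1, every T > 1, every η ∈ (0,1) and every function C : ℕ → (0,∞) there exists ε > 0 such that the following holds for every N ≥ 1. Let ν_I : (ZMod N)^I → ℝ for I ⊊ {1,…,d} be nonnegative weights, let ν_{[d]} : (ZMod N)^d → ℝ be nonnegative, and let Ω ⊆ (ZMod N)^d have face structure. Assume: (i) |Dg(x)| ≤ T for every g ∈ S_T and every x ∈ Ω; (ii) for every m ≥ 0 and all g_1,…,g_m ∈ S_T, |⟨∏_{j=1}^m Dg_j, f⟩_ν| ≤ C(m) whenever ‖f‖_{□,ν} ≤ 1; (iii) ⟨f, Df⟩_ν > 0 for every nonzero f ∈ F_T; (iv) ‖ν_{[d]} − 1‖_{□,ν} ≤ ε, ⟨ν_{[d]}, 1⟩_ν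 ≤ 1 + ε and ⟨1, 1⟩_ν ≤ 1 + ε. Then for every f : (ZMod N)^d → ℝ with 0 ≤ f ≤ ν_{[d]} pointwise there exist functions g, h : (ZMod N)^d → ℝ such that f(x) = g(x) + h(x) for all x ∈ Ω, 0 ≤ g(x) ≤ 2 for all x ∈ Ω, and ‖h·1_Ω‖_{□,ν} ≤ η. -/
noncomputable section
open Finset

/-- The weighted inner product `⟨f,g⟩_ν`. -/
def wInner {ι : Type*} [Fintype ι] [DecidableEq ι] {N : ℕ} [NeZero N]
    (ν : (I : Finset ι) → (I → ZMod N) → ℝ) (f g : (ι → ZMod N) → ℝ) : ℝ :=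
  Finset.expect Finset.univ fun x : ι → ZMod N =>
    f x * g x * ∏ I ∈ univ.filter (fun I : Finset ι => I ≠ univ), ν I (fun i => x i.1)

/-- The dual function `Df`. -/
def dualFn {ι : Type*} [Fintype ι] [DecidableEq ι] {N : ℕ} [NeZero N]
    (ν : (I : Finset ι) → (I → ZMod N) → ℝ) (f : (ι → ZMod N) → ℝ)
    (x : ι → ZMod N) : ℝ :=
  Finset.expect Finset.univ fun y : ι → ZMod N =>
    (∏ ω ∈ univ.filter (fun ω : ι → Bool => ω ≠ fun _ => false), f (proj ω x y)) *
      ∏ I ∈ univ.filter (fun I : Finset ι => I ≠ univ),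
        ∏ ω ∈ univ.filter (fun ω : I → Bool => ω ≠ fun _ => false), ν I (projI ω x y)

/-- A set `Ω` has face structure if it is the intersection of sets `Ω_J` over `∅ ≠ J ⊊ ι`,
where membership in `Ω_J` depends only on the coordinates outside of `J`. -/
def HasFaceStructure {ι : Type*} [Fintype ι] [DecidableEq ι] {N : ℕ}
    (Ω : Set (ι → ZMod N)) : Prop :=
  ∃ ΩJ : Finset ι → Set (ι → ZMod N),
    (∀ J : Finset ι, J ≠ ∅ → J ≠ univ →
      ∀ x y : ι → ZMod N, (∀ i, i ∉ J → x i = y i) → (x ∈ ΩJ J → y ∈ ΩJ J)) ∧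
    Ω = ⋂ J ∈ {J : Finset ι | J ≠ ∅ ∧ J ≠ univ}, ΩJ J

/-- `F_T`: functions supported on `Ω`. -/
def FT {ι : Type*} {N : ℕ} (Ω : Set (ι → ZMod N)) : Set ((ι → ZMod N) → ℝ) :=
  {f | ∀ x, x ∉ Ω → f x = 0}

/-- `S_T`: functions supported on `Ω` and dominated by `ν_{[d]} + 2`. -/
def STset {ι : Type*} {N : ℕ} (Ω : Set (ι → ZMod N)) (νd : (ι → ZMod N) → ℝ) :
    Set ((ι → ZMod N) → ℝ) :=
  {f | f ∈ FT Ω ∧ ∀ x, |f x| ≤ νd x + 2}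
set_option linter.unusedSectionVars false

section AuxLemmas

variable {ι : Type*} [Fintype ι] [DecidableEq ι] {N : ℕ} [NeZero N]

lemma proj_false (x y : ι → ZMod N) : proj (fun _ => false) x y = x := by
  funext i; simp [proj]

lemma projI_false {I : Finset ι} (x y : ι → ZMod N) :
    projI (fun _ => false) x y = fun i : I => x i.1 := by
  funext i; simp [projI]

/-- Averaging over an extra update of one coordinate doesn't change the expectation. -/
lemma expect_update_eq {γ : Type*} [Fintype γ] [Nonempty γ]
    (F : (ι → γ) → ℝ) (i₀ : ι) :
    (Finset.expect Finset.univ fun x : ι → γ => F x) =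
      Finset.expect Finset.univ fun x : ι → γ =>
        Finset.expect Finset.univ fun s : γ => F (Function.update x i₀ s) := by
  classical
  let e := Equiv.piSplitAt i₀ (fun _ : ι => γ)
  have hupd : ∀ (x : ι → γ) (s : γ), Function.update x i₀ s = e.symm (s, (e x).2) := by
    intro x s
    funext j
    by_cases hj : j = i₀
    · subst hj; simp [e, Equiv.piSplitAt, Function.update]
    · simp [e, Equiv.piSplitAt, Function.update, hj]
  have h1 : ∀ s : γ, (Finset.expect Finset.univ fun x : ι → γ => F (Function.update x i₀ s))
      = Finset.expect Finset.univ fun x' : {j // j ≠ i₀} → γ => F (e.symm (s, x')) := by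
    intro s
    calc (Finset.expect Finset.univ fun x : ι → γ => F (Function.update x i₀ s))
        = Finset.expect Finset.univ fun p : γ × ({j // j ≠ i₀} → γ) => F (e.symm (s, p.2)) :=
          Fintype.expect_equiv e _ _ (fun x => by rw [hupd x s])
      _ = Finset.expect Finset.univ fun r : γ =>
            Finset.expect Finset.univ fun x' : {j // j ≠ i₀} → γ => F (e.symm (s, x')) := by
          rw [← Finset.univ_product_univ, Finset.expect_product]
      _ = Finset.expect Finset.univ fun x' : {j // j ≠ i₀} → γ => F (e.symm (s, x')) :=
          Finset.expect_const Finset.univ_nonempty _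
  calc (Finset.expect Finset.univ fun x : ι → γ => F x)
      = Finset.expect Finset.univ fun p : γ × ({j // j ≠ i₀} → γ) => F (e.symm p) :=
        Fintype.expect_equiv e _ _ (fun x => by simp)
    _ = Finset.expect Finset.univ fun s : γ =>
          Finset.expect Finset.univ fun x' : {j // j ≠ i₀} → γ => F (e.symm (s, x')) := by
        rw [← Finset.univ_product_univ, Finset.expect_product]
    _ = Finset.expect Finset.univ fun s : γ =>
          Finset.expect Finset.univ fun x : ι → γ => F (Function.update x i₀ s) :=
        Finset.expect_congr rfl (fun s _ => (h1 s).symm)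
    _ = Finset.expect Finset.univ fun x : ι → γ =>
          Finset.expect Finset.univ fun s : γ => F (Function.update x i₀ s) :=
        Finset.expect_comm _ _ _

end AuxLemmas
section AuxLemmas2

variable {ι : Type*} [Fintype ι] [DecidableEq ι] {N : ℕ} [NeZero N]

lemma gowersInner_ite_zero (ν : (I : Finset ι) → (I → ZMod N) → ℝ) (w u : (ι → ZMod N) → ℝ) :
    gowersInner ν (fun ω => if ω = (fun _ => false) then w else u) = wInner ν w (dualFn ν u) := by
  unfold gowersInner wInner dualFn
  refine Finset.expect_congr rfl (fun x _ => ?_)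
  have key : ∀ y : ι → ZMod N,
      (∏ ω : ι → Bool, (if ω = (fun _ => false) then w else u) (proj ω x y)) * weightProd ν x y
      = (w x * ∏ I ∈ Finset.univ.filter (fun I : Finset ι => I ≠ Finset.univ), ν I (fun i => x i.1)) *
        ((∏ ω ∈ Finset.univ.filter (fun ω : ι → Bool => ω ≠ fun _ => false), u (proj ω x y)) *
         ∏ I ∈ Finset.univ.filter (fun I : Finset ι => I ≠ Finset.univ),
           ∏ ωI ∈ Finset.univ.filter (fun ωI : I → Bool => ωI ≠ fun _ => false), ν I (projI ωI x y)) := by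
    intro y
    have h1 : (∏ ω : ι → Bool, (if ω = (fun _ => false) then w else u) (proj ω x y))
        = w x * ∏ ω ∈ Finset.univ.filter (fun ω : ι → Bool => ω ≠ fun _ => false), u (proj ω x y) := by
      rw [Finset.filter_ne', ← Finset.mul_prod_erase Finset.univ _
        (Finset.mem_univ (fun _ => false : ι → Bool)), if_pos rfl, proj_false]
      congr 1
      refine Finset.prod_congr rfl (fun ω hω => ?_)
      rw [if_neg (Finset.ne_of_mem_erase hω)]
    have h2 : weightProd ν x y
        = (∏ I ∈ Finset.univ.filter (fun I : Finset ι => I ≠ Finset.univ), ν I (fun i => x i.1)) *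
          ∏ I ∈ Finset.univ.filter (fun I : Finset ι => I ≠ Finset.univ),
            ∏ ωI ∈ Finset.univ.filter (fun ωI : I → Bool => ωI ≠ fun _ => false), ν I (projI ωI x y) := by
      unfold weightProd
      rw [← Finset.prod_mul_distrib]
      refine Finset.prod_congr rfl (fun I hI => ?_)
      rw [Finset.filter_ne', ← Finset.mul_prod_erase Finset.univ _
        (Finset.mem_univ (fun _ => false : I → Bool)), projI_false]
    rw [h1, h2]; ring
  rw [Finset.expect_congr rfl (fun y _ => key y), ← Finset.mul_expect]
  ring

end AuxLemmas2
section AuxLemmas3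

variable {ι : Type*} [Fintype ι] [DecidableEq ι] {N : ℕ} [NeZero N]

lemma proj_proj (ω ω₀ : ι → Bool) (x y : ι → ZMod N) :
    proj ω (proj ω₀ x y) (proj ω₀ y x) = proj (fun i => xor (ω i) (ω₀ i)) x y := by
  funext i; simp only [proj]
  rcases Bool.eq_false_or_eq_true (ω i) with h | h <;>
    rcases Bool.eq_false_or_eq_true (ω₀ i) with h0 | h0 <;> simp [h, h0]

lemma projI_proj {I : Finset ι} (ωI : I → Bool) (ω₀ : ι → Bool) (x y : ι → ZMod N) :
    projI ωI (proj ω₀ x y) (proj ω₀ y x) = projI (fun i => xor (ωI i) (ω₀ i.1)) x y := by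
  funext i; simp only [projI, proj]
  rcases Bool.eq_false_or_eq_true (ωI i) with h | h <;>
    rcases Bool.eq_false_or_eq_true (ω₀ i.1) with h0 | h0 <;> simp [h, h0]

/-- The involutive equivalence `ω ↦ ω xor σ` on Boolean cubes. -/
def xorEquiv {κ : Type*} (σ : κ → Bool) : (κ → Bool) ≃ (κ → Bool) :=
  Function.Involutive.toPerm (fun ω => fun i => xor (ω i) (σ i))
    (fun ω => by
      funext i
      rcases Bool.eq_false_or_eq_true (ω i) with h | h <;>
        rcases Bool.eq_false_or_eq_true (σ i) with h0 | h0 <;> simp [h, h0])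

@[simp] lemma xorEquiv_apply {κ : Type*} (σ : κ → Bool) (ω : κ → Bool) :
    xorEquiv σ ω = fun i => xor (ω i) (σ i) := rfl

lemma xor_xor_cancel {κ : Type*} (ω σ : κ → Bool) :
    (fun i => xor (xor (ω i) (σ i)) (σ i)) = ω := by
  funext i
  rcases Bool.eq_false_or_eq_true (ω i) with h | h <;>
    rcases Bool.eq_false_or_eq_true (σ i) with h0 | h0 <;> simp [h, h0]

lemma weightProd_proj (ν : (I : Finset ι) → (I → ZMod N) → ℝ) (ω₀ : ι → Bool)
    (x y : ι → ZMod N) :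
    weightProd ν (proj ω₀ x y) (proj ω₀ y x) = weightProd ν x y := by
  unfold weightProd
  refine Finset.prod_congr rfl (fun I _ => ?_)
  refine Fintype.prod_equiv (xorEquiv (fun i : I => ω₀ i.1)) _ _ (fun ωI => ?_)
  rw [projI_proj, xorEquiv_apply]

lemma gowersInner_xor (ν : (I : Finset ι) → (I → ZMod N) → ℝ)
    (F : (ι → Bool) → (ι → ZMod N) → ℝ) (ω₀ : ι → Bool) :
    gowersInner ν F = gowersInner ν (fun ω => F (fun i => xor (ω i) (ω₀ i))) := by
  unfold gowersInner
  rw [← Finset.expect_product', ← Finset.expect_product', Finset.univ_product_univ]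
  have hinv : Function.Involutive
      (fun p : (ι → ZMod N) × (ι → ZMod N) => (proj ω₀ p.1 p.2, proj ω₀ p.2 p.1)) := by
    intro p
    refine Prod.ext ?_ ?_ <;>
      · funext i; simp only [proj]
        rcases Bool.eq_false_or_eq_true (ω₀ i) with h | h <;> simp [h]
  refine Fintype.expect_equiv hinv.toPerm _ _ (fun p => ?_)
  simp only [Function.Involutive.coe_toPerm]
  rw [weightProd_proj]
  congr 1
  refine Fintype.prod_equiv (xorEquiv ω₀) _ _ (fun ω => ?_)
  simp only [xorEquiv_apply]
  rw [proj_proj]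
  simp only [Bool.xor_assoc, Bool.xor_self, Bool.xor_false]

lemma gowersInner_ite_slot (ν : (I : Finset ι) → (I → ZMod N) → ℝ) (ω₀ : ι → Bool)
    (w u : (ι → ZMod N) → ℝ) :
    gowersInner ν (fun ω => if ω = ω₀ then w else u) = wInner ν w (dualFn ν u) := by
  rw [gowersInner_xor ν _ ω₀]
  have hc : ∀ ω : ι → Bool, ((fun i => xor (ω i) (ω₀ i)) = ω₀) ↔ (ω = fun _ => false) := by
    intro ω
    constructor
    · intro h; funext i
      have h' := congrFun h i
      rcases Bool.eq_false_or_eq_true (ω₀ i) with hb | hb <;>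
        rcases Bool.eq_false_or_eq_true (ω i) with hw | hw <;> simp_all
    · intro h; funext i
      have h' := congrFun h i
      rw [h']; simp
  have h2 : (fun ω : ι → Bool => if (fun i => xor (ω i) (ω₀ i)) = ω₀ then w else u)
      = fun ω => if ω = (fun _ => false) then w else u := by
    funext ω; exact if_congr (hc ω) rfl rfl
  rw [h2, gowersInner_ite_zero]

end AuxLemmas3
section AuxLemmas4

variable {ι : Type*} [Fintype ι] [DecidableEq ι] {N : ℕ} [NeZero N]

lemma proj_update_false (ω : ι → Bool) (i₀ : ι) (h : ω i₀ = false) (x y : ι → ZMod N)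
    (s t : ZMod N) :
    proj ω (Function.update x i₀ s) (Function.update y i₀ t)
      = Function.update (proj ω x y) i₀ s := by
  funext i
  by_cases hi : i = i₀
  · subst hi; simp [proj, h]
  · simp [proj, Function.update_of_ne hi]

lemma proj_update_true (ω : ι → Bool) (i₀ : ι) (h : ω i₀ = true) (x y : ι → ZMod N)
    (s t : ZMod N) :
    proj ω (Function.update x i₀ s) (Function.update y i₀ t)
      = Function.update (proj (Function.update ω i₀ false) x y) i₀ t := by
  funext i
  by_cases hi : i = i₀
  · subst hi; simp [proj, h]
  · simp [proj, Function.update_of_ne hi]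

lemma projI_update_not_mem {I : Finset ι} (i₀ : ι) (hI : i₀ ∉ I) (ωI : I → Bool)
    (x y : ι → ZMod N) (s t : ZMod N) :
    projI ωI (Function.update x i₀ s) (Function.update y i₀ t) = projI ωI x y := by
  funext j
  have hj : j.1 ≠ i₀ := fun hh => hI (hh ▸ j.2)
  simp [projI, Function.update_of_ne hj]

lemma projI_update_false {I : Finset ι} {i₀ : ι} (h : i₀ ∈ I) (ωI : I → Bool)
    (hw : ωI ⟨i₀, h⟩ = false) (x y : ι → ZMod N) (s t : ZMod N) :
    projI ωI (Function.update x i₀ s) (Function.update y i₀ t)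
      = Function.update (projI ωI x y) ⟨i₀, h⟩ s := by
  funext j
  by_cases hj : j = (⟨i₀, h⟩ : I)
  · subst hj; simp [projI, hw]
  · have hj1 : j.1 ≠ i₀ := fun hh => hj (Subtype.ext hh)
    simp [projI, Function.update_of_ne hj1, Function.update_of_ne hj]

lemma projI_update_true {I : Finset ι} {i₀ : ι} (h : i₀ ∈ I) (ωI : I → Bool)
    (hw : ωI ⟨i₀, h⟩ = true) (x y : ι → ZMod N) (s t : ZMod N) :
    projI ωI (Function.update x i₀ s) (Function.update y i₀ t)
      = Function.update (projI (Function.update ωI ⟨i₀, h⟩ false) x y) ⟨i₀, h⟩ t := by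
  funext j
  by_cases hj : j = (⟨i₀, h⟩ : I)
  · subst hj; simp [projI, hw]
  · have hj1 : j.1 ≠ i₀ := fun hh => hj (Subtype.ext hh)
    simp [projI, Function.update_of_ne hj1, Function.update_of_ne hj]

lemma gowersInner_self_nonneg [Nonempty ι] (ν : (I : Finset ι) → (I → ZMod N) → ℝ)
    (hν : ∀ I : Finset ι, I ≠ Finset.univ → ∀ z, 0 ≤ ν I z)
    (f : (ι → ZMod N) → ℝ) :
    0 ≤ gowersInner ν (fun _ => f) := by
  classical
  obtain ⟨i₀⟩ := ‹Nonempty ι›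
  unfold gowersInner
  rw [expect_update_eq (fun x : ι → ZMod N => Finset.expect Finset.univ fun y : ι → ZMod N =>
    (∏ ω : ι → Bool, f (proj ω x y)) * weightProd ν x y) i₀]
  refine Finset.expect_nonneg (fun x _ => ?_)
  have step : ∀ s : ZMod N,
      (Finset.expect Finset.univ fun y : ι → ZMod N =>
        (∏ ω : ι → Bool, f (proj ω (Function.update x i₀ s) y)) *
          weightProd ν (Function.update x i₀ s) y)
      = Finset.expect Finset.univ fun y : ι → ZMod N =>
          Finset.expect Finset.univ fun t : ZMod N =>
            (∏ ω : ι → Bool, f (proj ω (Function.update x i₀ s) (Function.update y i₀ t))) *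
              weightProd ν (Function.update x i₀ s) (Function.update y i₀ t) := fun s =>
    expect_update_eq _ i₀
  rw [Finset.expect_congr rfl (fun s _ => step s), Finset.expect_comm]
  refine Finset.expect_nonneg (fun y _ => ?_)
  -- now the key factorization for fixed x y
  set ψ : Finset ι → ZMod N → ℝ := fun I r =>
    if h : i₀ ∈ I then
      ∏ ωI ∈ Finset.univ.filter (fun ωI : I → Bool => ωI ⟨i₀, h⟩ = false),
        ν I (Function.update (projI ωI x y) ⟨i₀, h⟩ r)
    else 1 with hψdef
  set Φ : ZMod N → ℝ := fun r =>
    (∏ ω ∈ Finset.univ.filter (fun ω : ι → Bool => ω i₀ = false),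
      f (Function.update (proj ω x y) i₀ r)) *
    ∏ I ∈ Finset.univ.filter (fun I : Finset ι => I ≠ Finset.univ ∧ i₀ ∈ I), ψ I r with hΦdef
  set C : ℝ := ∏ I ∈ Finset.univ.filter (fun I : Finset ι => I ≠ Finset.univ ∧ ¬ i₀ ∈ I),
    ∏ ωI : I → Bool, ν I (projI ωI x y) with hCdef
  have hC : 0 ≤ C := by
    refine Finset.prod_nonneg (fun I hI => Finset.prod_nonneg (fun ωI _ => ?_))
    exact hν I (Finset.mem_filter.mp hI).2.1 _
  have hfa : ∀ s t : ZMod N,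
      (∏ ω : ι → Bool, f (proj ω (Function.update x i₀ s) (Function.update y i₀ t)))
      = (∏ ω ∈ Finset.univ.filter (fun ω : ι → Bool => ω i₀ = false),
          f (Function.update (proj ω x y) i₀ s)) *
        ∏ ω ∈ Finset.univ.filter (fun ω : ι → Bool => ω i₀ = false),
          f (Function.update (proj ω x y) i₀ t) := by
    intro s t
    rw [← Finset.prod_filter_mul_prod_filter_not Finset.univ (fun ω : ι → Bool => ω i₀ = false)]
    congr 1
    · refine Finset.prod_congr rfl (fun ω hω => ?_)
      rw [proj_update_false ω i₀ (by simpa using (Finset.mem_filter.mp hω).2) x y s t]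
    · refine Finset.prod_nbij' (fun ω => Function.update ω i₀ false)
        (fun ω => Function.update ω i₀ true) ?_ ?_ ?_ ?_ ?_
      · intro ω hω; simp
      · intro ω hω; simp
      · intro ω hω
        have hωt : ω i₀ = true := by
          have := (Finset.mem_filter.mp hω).2; simpa using this
        funext i
        by_cases hi : i = i₀
        · subst hi; simp [hωt]
        · simp [Function.update_of_ne hi]
      · intro ω hω
        have hωf : ω i₀ = false := by
          have := (Finset.mem_filter.mp hω).2; simpa using this
        funext i
        by_cases hi : i = i₀
        · subst hi; simp [hωf]
        · simp [Function.update_of_ne hi]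
      · intro ω hω
        have hωt : ω i₀ = true := by
          have := (Finset.mem_filter.mp hω).2; simpa using this
        rw [proj_update_true ω i₀ hωt x y s t]
  have hwt : ∀ s t : ZMod N,
      weightProd ν (Function.update x i₀ s) (Function.update y i₀ t)
      = C * ((∏ I ∈ Finset.univ.filter (fun I : Finset ι => I ≠ Finset.univ ∧ i₀ ∈ I), ψ I s) *
          ∏ I ∈ Finset.univ.filter (fun I : Finset ι => I ≠ Finset.univ ∧ i₀ ∈ I), ψ I t) := by
    intro s t
    unfold weightProd
    rw [← Finset.prod_filter_mul_prod_filter_not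
      (Finset.univ.filter (fun I : Finset ι => I ≠ Finset.univ)) (fun I : Finset ι => i₀ ∈ I),
      Finset.filter_filter, Finset.filter_filter]
    have h2 : (∏ I ∈ Finset.univ.filter (fun I : Finset ι => I ≠ Finset.univ ∧ ¬ i₀ ∈ I),
        ∏ ωI : I → Bool,
          ν I (projI ωI (Function.update x i₀ s) (Function.update y i₀ t))) = C := by
      refine Finset.prod_congr rfl (fun I hI => Finset.prod_congr rfl (fun ωI _ => ?_))
      rw [projI_update_not_mem i₀ (Finset.mem_filter.mp hI).2.2 ωI x y s t]
    have h1 : (∏ I ∈ Finset.univ.filter (fun I : Finset ι => I ≠ Finset.univ ∧ i₀ ∈ I),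
        ∏ ωI : I → Bool,
          ν I (projI ωI (Function.update x i₀ s) (Function.update y i₀ t)))
        = (∏ I ∈ Finset.univ.filter (fun I : Finset ι => I ≠ Finset.univ ∧ i₀ ∈ I), ψ I s) *
          ∏ I ∈ Finset.univ.filter (fun I : Finset ι => I ≠ Finset.univ ∧ i₀ ∈ I), ψ I t := by
      rw [← Finset.prod_mul_distrib]
      refine Finset.prod_congr rfl (fun I hI => ?_)
      have hmem : i₀ ∈ I := (Finset.mem_filter.mp hI).2.2
      rw [hψdef]
      simp only [dif_pos hmem]
      rw [← Finset.prod_filter_mul_prod_filter_not Finset.univ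
        (fun ωI : I → Bool => ωI ⟨i₀, hmem⟩ = false)]
      congr 1
      · refine Finset.prod_congr rfl (fun ωI hω => ?_)
        rw [projI_update_false hmem ωI (by simpa using (Finset.mem_filter.mp hω).2) x y s t]
      · refine Finset.prod_nbij' (fun ωI => Function.update ωI ⟨i₀, hmem⟩ false)
          (fun ωI => Function.update ωI ⟨i₀, hmem⟩ true) ?_ ?_ ?_ ?_ ?_
        · intro ω hω; simp
        · intro ω hω; simp
        · intro ω hω
          have hωt : ω ⟨i₀, hmem⟩ = true := by
            have := (Finset.mem_filter.mp hω).2; simpa using this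
          funext j
          by_cases hj : j = (⟨i₀, hmem⟩ : I)
          · subst hj; simp [hωt]
          · simp [Function.update_of_ne hj]
        · intro ω hω
          have hωf : ω ⟨i₀, hmem⟩ = false := by
            have := (Finset.mem_filter.mp hω).2; simpa using this
          funext j
          by_cases hj : j = (⟨i₀, hmem⟩ : I)
          · subst hj; simp [hωf]
          · simp [Function.update_of_ne hj]
        · intro ω hω
          have hωt : ω ⟨i₀, hmem⟩ = true := by
            have := (Finset.mem_filter.mp hω).2; simpa using this
          rw [projI_update_true hmem ω hωt x y s t]
    rw [h1, h2]
    ring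
  have key : ∀ s t : ZMod N,
      (∏ ω : ι → Bool, f (proj ω (Function.update x i₀ s) (Function.update y i₀ t))) *
        weightProd ν (Function.update x i₀ s) (Function.update y i₀ t)
      = C * (Φ s * Φ t) := by
    intro s t
    rw [hfa s t, hwt s t, hΦdef]
    ring
  calc (0:ℝ) ≤ C * ((Finset.expect Finset.univ fun r : ZMod N => Φ r) *
        (Finset.expect Finset.univ fun r : ZMod N => Φ r)) :=
        mul_nonneg hC (mul_self_nonneg _)
    _ = Finset.expect Finset.univ fun s : ZMod N =>
          Finset.expect Finset.univ fun t : ZMod N =>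
            (∏ ω : ι → Bool, f (proj ω (Function.update x i₀ s) (Function.update y i₀ t))) *
              weightProd ν (Function.update x i₀ s) (Function.update y i₀ t) := by
        rw [Finset.expect_mul_expect, Finset.mul_expect]
        refine Finset.expect_congr rfl (fun s _ => ?_)
        rw [Finset.mul_expect]
        exact Finset.expect_congr rfl (fun t _ => (key s t).symm)

end AuxLemmas4
section AuxLemmas5

variable {ι : Type*} [Fintype ι] [DecidableEq ι] {N : ℕ} [NeZero N]

lemma gowersInner_smul (ν : (I : Finset ι) → (I → ZMod N) → ℝ) (c : ℝ)
    (u : (ι → ZMod N) → ℝ) :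
    gowersInner ν (fun _ => fun z => c * u z)
      = c ^ (2 ^ Fintype.card ι) * gowersInner ν (fun _ => u) := by
  unfold gowersInner
  rw [Finset.mul_expect]
  refine Finset.expect_congr rfl (fun x _ => ?_)
  rw [Finset.mul_expect]
  refine Finset.expect_congr rfl (fun y _ => ?_)
  rw [Finset.prod_mul_distrib, Finset.prod_const, Finset.card_univ, Fintype.card_fun,
    Fintype.card_bool]
  ring

lemma rpow_exponent_cancel {a : ℝ} (ha : 0 ≤ a) (n : ℕ) :
    (a ^ (2 ^ n : ℕ)) ^ (((2:ℝ) ^ n)⁻¹) = a := by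
  rw [← Real.rpow_natCast a (2 ^ n), ← Real.rpow_mul ha]
  push_cast
  rw [mul_inv_cancel₀ (by positivity), Real.rpow_one]

lemma boxNorm_le_of_gowersInner_le (ν : (I : Finset ι) → (I → ZMod N) → ℝ)
    (u : (ι → ZMod N) → ℝ) {η : ℝ} (hη : 0 ≤ η)
    (hle : gowersInner ν (fun _ => u) ≤ η ^ (2 ^ Fintype.card ι : ℕ))
    (hG : 0 ≤ gowersInner ν (fun _ => u)) :
    boxNorm ν u ≤ η := by
  unfold boxNorm
  calc gowersInner ν (fun _ => u) ^ (((2:ℝ) ^ Fintype.card ι)⁻¹)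
      ≤ (η ^ (2 ^ Fintype.card ι : ℕ)) ^ (((2:ℝ) ^ Fintype.card ι)⁻¹) :=
        Real.rpow_le_rpow hG hle (by positivity)
    _ = η := rpow_exponent_cancel hη _

lemma boxNorm_smul (ν : (I : Finset ι) → (I → ZMod N) → ℝ) (u : (ι → ZMod N) → ℝ)
    {c : ℝ} (hc : 0 ≤ c) (hG : 0 ≤ gowersInner ν (fun _ => u)) :
    boxNorm ν (fun z => c * u z) = c * boxNorm ν u := by
  unfold boxNorm
  rw [gowersInner_smul, Real.mul_rpow (by positivity) hG, rpow_exponent_cancel hc]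

lemma dualFn_eq_zero_of_not_mem (ν : (I : Finset ι) → (I → ZMod N) → ℝ)
    {Ω : Set (ι → ZMod N)} (hface : HasFaceStructure Ω)
    {u : (ι → ZMod N) → ℝ} (hu : ∀ z, z ∉ Ω → u z = 0)
    {x : ι → ZMod N} (hx : x ∉ Ω) : dualFn ν u x = 0 := by
  classical
  obtain ⟨ΩJ, hmono, hΩeq⟩ := hface
  have hx' : ∃ J : Finset ι, (J ≠ ∅ ∧ J ≠ Finset.univ) ∧ x ∉ ΩJ J := by
    by_contra hcon
    push_neg at hcon
    apply hx
    rw [hΩeq]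
    simp only [Set.mem_iInter, Set.mem_setOf_eq]
    intro J hJ
    exact hcon J ⟨Finset.nonempty_iff_ne_empty.mpr hJ.1, hJ.2⟩
  obtain ⟨J, ⟨hJne, hJuniv⟩, hxJ⟩ := hx'
  obtain ⟨i₀, hi₀⟩ := Finset.nonempty_iff_ne_empty.mpr hJne
  unfold dualFn
  refine Finset.expect_eq_zero (fun y _ => ?_)
  have hzero : u (proj (fun i => decide (i = i₀)) x y) = 0 := by
    apply hu
    intro hmem
    apply hxJ
    have hmem' : proj (fun i => decide (i = i₀)) x y ∈ ΩJ J := by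
      rw [hΩeq] at hmem
      simp only [Set.mem_iInter, Set.mem_setOf_eq] at hmem
      exact hmem J ⟨hJne, hJuniv⟩
    refine hmono J hJne hJuniv _ x (fun i hiJ => ?_) hmem'
    have hne : i ≠ i₀ := fun h => hiJ (h ▸ hi₀)
    simp [proj, hne]
  rw [Finset.prod_eq_zero (i := fun i => decide (i = i₀)) ?_ hzero, zero_mul]
  rw [Finset.mem_filter]
  refine ⟨Finset.mem_univ _, fun h => ?_⟩
  have := congrFun h i₀
  simp at this

lemma exists_poly_posPart (T δ : ℝ) (hT : 0 < T) (hδ : 0 < δ) :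
    ∃ p : Polynomial ℝ, p.eval 0 = 0 ∧ ∀ t ∈ Set.Icc (-T) T, |p.eval t - max t 0| ≤ δ := by
  obtain ⟨q, hq⟩ := exists_polynomial_near_of_continuousOn (-T) T (fun t => max t 0)
    ((continuous_id.max continuous_const).continuousOn) (δ/2) (by positivity)
  refine ⟨q - Polynomial.C (q.eval 0), by simp, fun t ht => ?_⟩
  have h0 := hq 0 ⟨by linarith, by linarith⟩
  have h1 := hq t ht
  simp only [max_self] at h0
  simp only [Polynomial.eval_sub, Polynomial.eval_C]
  have habs : |q.eval 0| ≤ δ/2 := by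
    have : |q.eval 0 - 0| ≤ δ/2 := le_of_lt (by simpa using h0)
    simpa using this
  calc |q.eval t - q.eval 0 - max t 0| = |(q.eval t - max t 0) + (-(q.eval 0))| := by ring_nf
    _ ≤ |q.eval t - max t 0| + |(-(q.eval 0))| := abs_add_le _ _
    _ ≤ δ/2 + δ/2 := add_le_add (le_of_lt h1) (by simpa using habs)
    _ = δ := by ring

end AuxLemmas5
section AuxLemmas6

variable {ι : Type*} [Fintype ι] [DecidableEq ι] {N : ℕ} [NeZero N]

lemma gowersInner_expand (ν : (I : Finset ι) → (I → ZMod N) → ℝ)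
    (u w : (ι → ZMod N) → ℝ) (t : ℝ) :
    gowersInner ν (fun _ => fun z => t * w z + u z)
      = ∑ S ∈ (Finset.univ : Finset (ι → Bool)).powerset,
          t ^ S.card * gowersInner ν (fun ω => if ω ∈ S then w else u) := by
  unfold gowersInner
  have point : ∀ x y : ι → ZMod N,
      (∏ ω : ι → Bool, (t * w (proj ω x y) + u (proj ω x y))) * weightProd ν x y
      = ∑ S ∈ (Finset.univ : Finset (ι → Bool)).powerset, t ^ S.card *
          ((∏ ω : ι → Bool, (if ω ∈ S then w else u) (proj ω x y)) * weightProd ν x y) := by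
    intro x y
    rw [Finset.prod_add, Finset.sum_mul]
    refine Finset.sum_congr rfl (fun S hS => ?_)
    have h1 : (∏ ω ∈ S, (t * w (proj ω x y))) = t ^ S.card * ∏ ω ∈ S, w (proj ω x y) := by
      rw [Finset.prod_mul_distrib, Finset.prod_const]
    have h2 : (∏ ω : ι → Bool, (if ω ∈ S then w else u) (proj ω x y))
        = (∏ ω ∈ S, w (proj ω x y)) * ∏ ω ∈ Finset.univ \ S, u (proj ω x y) := by
      rw [← Finset.prod_filter_mul_prod_filter_not Finset.univ (fun ω => ω ∈ S)]
      congr 1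
      · rw [Finset.filter_mem_eq_inter, Finset.univ_inter]
        exact Finset.prod_congr rfl (fun ω hω => by rw [if_pos hω])
      · rw [← Finset.sdiff_eq_filter]
        exact Finset.prod_congr rfl (fun ω hω => by rw [if_neg (Finset.mem_sdiff.mp hω).2])
    rw [h1, h2]; ring
  calc (Finset.expect Finset.univ fun x : ι → ZMod N =>
          Finset.expect Finset.univ fun y : ι → ZMod N =>
            (∏ ω : ι → Bool, (t * w (proj ω x y) + u (proj ω x y))) * weightProd ν x y)
      = Finset.expect Finset.univ fun x : ι → ZMod N =>
          ∑ S ∈ (Finset.univ : Finset (ι → Bool)).powerset,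
            Finset.expect Finset.univ fun y : ι → ZMod N => t ^ S.card *
              ((∏ ω : ι → Bool, (if ω ∈ S then w else u) (proj ω x y)) * weightProd ν x y) := by
        refine Finset.expect_congr rfl (fun x _ => ?_)
        rw [Finset.expect_congr rfl (fun y _ => point x y)]
        exact Finset.expect_sum_comm _ _ _
    _ = ∑ S ∈ (Finset.univ : Finset (ι → Bool)).powerset,
          Finset.expect Finset.univ fun x : ι → ZMod N =>
            Finset.expect Finset.univ fun y : ι → ZMod N => t ^ S.card *
              ((∏ ω : ι → Bool, (if ω ∈ S then w else u) (proj ω x y)) * weightProd ν x y) :=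
        Finset.expect_sum_comm _ _ _
    _ = ∑ S ∈ (Finset.univ : Finset (ι → Bool)).powerset,
          t ^ S.card * gowersInner ν (fun ω => if ω ∈ S then w else u) := by
        refine Finset.sum_congr rfl (fun S _ => ?_)
        unfold gowersInner
        rw [Finset.mul_expect]
        refine Finset.expect_congr rfl (fun x _ => ?_)
        rw [Finset.mul_expect]

lemma min_aux {α : Type*} [Fintype α] [DecidableEq α] [Nonempty α] (M : Finset α → ℝ)
    (β : ℝ) (hβ1 : ∀ a : α, M {a} = β)
    (hQ : ∀ t : ℝ, t ∈ Set.Icc (0:ℝ) 1 →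
      M ∅ ≤ ∑ S ∈ (Finset.univ : Finset α).powerset, t ^ S.card * M S) :
    0 ≤ β := by
  classical
  by_contra hneg
  push_neg at hneg
  have card_pos : (0:ℝ) < (Fintype.card α : ℝ) := by exact_mod_cast Fintype.card_pos
  set n : ℝ := (Fintype.card α : ℝ) with hn
  set K : ℝ := ∑ S ∈ (Finset.univ : Finset α).powerset, |M S| with hK
  have hK0 : 0 ≤ K := Finset.sum_nonneg (fun _ _ => abs_nonneg _)
  have hβn : n * β < 0 := mul_neg_of_pos_of_neg card_pos hneg
  set t₀ : ℝ := min 1 ((-(n*β))/(2*(K+1))) with ht₀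
  have ht₀pos : 0 < t₀ := by
    refine lt_min one_pos (div_pos ?_ (by positivity))
    linarith
  have ht₀le1 : t₀ ≤ 1 := min_le_left _ _
  have happ := hQ t₀ ⟨le_of_lt ht₀pos, ht₀le1⟩
  set P : Finset (Finset α) := (Finset.univ : Finset α).powerset with hP
  have hsplit1 : ∑ S ∈ P, t₀ ^ S.card * M S
      = (∑ S ∈ P.filter (fun S => S = ∅), t₀ ^ S.card * M S)
        + ∑ S ∈ P.filter (fun S => ¬ S = ∅), t₀ ^ S.card * M S :=
    (Finset.sum_filter_add_sum_filter_not P _ _).symm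
  have hempty : P.filter (fun S => S = ∅) = {∅} := by
    ext S
    simp [hP, Finset.mem_filter, Finset.mem_powerset]
  have hfirst : (∑ S ∈ P.filter (fun S => S = ∅), t₀ ^ S.card * M S) = M ∅ := by
    rw [hempty, Finset.sum_singleton, Finset.card_empty, pow_zero, one_mul]
  have hsplit2 : ∑ S ∈ P.filter (fun S => ¬ S = ∅), t₀ ^ S.card * M S
      = (∑ S ∈ (P.filter (fun S => ¬ S = ∅)).filter (fun S => S.card = 1), t₀ ^ S.card * M S)
        + ∑ S ∈ (P.filter (fun S => ¬ S = ∅)).filter (fun S => ¬ S.card = 1),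
            t₀ ^ S.card * M S :=
    (Finset.sum_filter_add_sum_filter_not _ _ _).symm
  have hone : (P.filter (fun S => ¬ S = ∅)).filter (fun S => S.card = 1)
      = P.filter (fun S => S.card = 1) := by
    rw [Finset.filter_filter]
    refine Finset.filter_congr (fun S _ => ?_)
    constructor
    · rintro ⟨-, h⟩; exact h
    · intro h
      refine ⟨?_, h⟩
      intro he
      rw [he] at h
      simp at h
  have hc1sum : (∑ S ∈ P.filter (fun S => S.card = 1), t₀ ^ S.card * M S) = t₀ * (n * β) := by
    have himg : P.filter (fun S => S.card = 1)
        = Finset.univ.image (fun a : α => ({a} : Finset α)) := by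
      ext S
      simp only [hP, Finset.mem_filter, Finset.mem_powerset, Finset.mem_image, Finset.mem_univ,
        true_and, Finset.card_eq_one]
      constructor
      · rintro ⟨-, a, rfl⟩; exact ⟨a, rfl⟩
      · rintro ⟨a, rfl⟩; exact ⟨Finset.subset_univ _, a, rfl⟩
    rw [himg, Finset.sum_image (fun a _ b _ h => Finset.singleton_injective h)]
    have hterm : ∀ a : α, t₀ ^ (({a} : Finset α).card) * M {a} = t₀ * β := by
      intro a
      rw [Finset.card_singleton, pow_one, hβ1 a]
    rw [Finset.sum_congr rfl (fun a _ => hterm a), Finset.sum_const, Finset.card_univ,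
      nsmul_eq_mul, hn]
    ring
  have hrest : (∑ S ∈ (P.filter (fun S => ¬ S = ∅)).filter (fun S => ¬ S.card = 1),
      t₀ ^ S.card * M S) ≤ t₀^2 * K := by
    calc (∑ S ∈ (P.filter (fun S => ¬ S = ∅)).filter (fun S => ¬ S.card = 1),
        t₀ ^ S.card * M S)
        ≤ ∑ S ∈ (P.filter (fun S => ¬ S = ∅)).filter (fun S => ¬ S.card = 1),
            t₀^2 * |M S| := by
          refine Finset.sum_le_sum (fun S hS => ?_)
          have h2 : 2 ≤ S.card := by
            have h1 := (Finset.mem_filter.mp hS).2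
            have h0 := (Finset.mem_filter.mp (Finset.mem_filter.mp hS).1).2
            have hpos : 0 < S.card := Finset.card_pos.mpr (Finset.nonempty_iff_ne_empty.mpr h0)
            omega
          have hpow : t₀ ^ S.card ≤ t₀ ^ 2 :=
            pow_le_pow_of_le_one (le_of_lt ht₀pos) ht₀le1 h2
          calc t₀ ^ S.card * M S ≤ t₀ ^ S.card * |M S| :=
                mul_le_mul_of_nonneg_left (le_abs_self _) (by positivity)
            _ ≤ t₀^2 * |M S| := mul_le_mul_of_nonneg_right hpow (abs_nonneg _)
      _ ≤ ∑ S ∈ P, t₀^2 * |M S| := by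
          refine Finset.sum_le_sum_of_subset_of_nonneg ?_ (fun S _ _ => by positivity)
          exact (Finset.filter_subset _ _).trans (Finset.filter_subset _ _)
      _ = t₀^2 * K := by rw [hK, Finset.mul_sum]
  have hfinal : M ∅ ≤ M ∅ + (t₀ * (n * β) + t₀^2 * K) := by
    calc M ∅ ≤ ∑ S ∈ P, t₀ ^ S.card * M S := happ
      _ = M ∅ + ((∑ S ∈ P.filter (fun S => S.card = 1), t₀ ^ S.card * M S)
            + ∑ S ∈ (P.filter (fun S => ¬ S = ∅)).filter (fun S => ¬ S.card = 1),
                t₀ ^ S.card * M S) := by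
          rw [hsplit1, hfirst, hsplit2, hone]
      _ ≤ M ∅ + (t₀ * (n * β) + t₀^2 * K) := by
          rw [hc1sum]
          exact add_le_add le_rfl (add_le_add le_rfl hrest)
  have hcontr : 0 ≤ t₀ * (n * β) + t₀^2 * K := by linarith
  have ht₀le2 : t₀ ≤ (-(n*β))/(2*(K+1)) := min_le_right _ _
  have hmul : t₀ * (2*(K+1)) ≤ -(n*β) := by
    rw [← le_div_iff₀ (by positivity)]
    exact ht₀le2
  nlinarith [mul_le_mul_of_nonneg_left hmul (le_of_lt ht₀pos), sq_nonneg t₀,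
    mul_pos ht₀pos ht₀pos]

lemma min_first_order [Nonempty ι] (ν : (I : Finset ι) → (I → ZMod N) → ℝ)
    {U : Set ((ι → ZMod N) → ℝ)} {u v : (ι → ZMod N) → ℝ}
    (hmem : ∀ t : ℝ, t ∈ Set.Icc (0:ℝ) 1 → (fun z => t * (v z - u z) + u z) ∈ U)
    (hmin : IsMinOn (fun g => gowersInner ν (fun _ => g)) U u) :
    0 ≤ wInner ν (fun z => v z - u z) (dualFn ν u) := by
  classical
  refine min_aux (fun S : Finset (ι → Bool) =>
    gowersInner ν (fun ω => if ω ∈ S then (fun z => v z - u z) else u)) _ (fun a => ?_) ?_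
  · exact (congrArg (gowersInner ν) (funext fun ω => by simp)).trans
      (gowersInner_ite_slot ν a _ u)
  · intro t ht
    have h1 := (isMinOn_iff.mp hmin) _ (hmem t ht)
    rw [gowersInner_expand ν u (fun z => v z - u z) t] at h1
    refine le_trans (le_of_eq ?_) h1
    exact congrArg (gowersInner ν) (funext fun ω => by simp)

end AuxLemmas6
section AuxLemmas7

variable {ι : Type*} [Fintype ι] [DecidableEq ι] {N : ℕ} [NeZero N]

lemma wInner_mul_one (ν : (I : Finset ι) → (I → ZMod N) → ℝ) (a b : (ι → ZMod N) → ℝ) :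
    wInner ν a b = wInner ν (fun x => a x * b x) (fun _ => 1) := by
  unfold wInner
  exact Finset.expect_congr rfl (fun x _ => by ring)

lemma wInner_one_mono (ν : (I : Finset ι) → (I → ZMod N) → ℝ)
    (hν : ∀ I : Finset ι, I ≠ Finset.univ → ∀ z, 0 ≤ ν I z)
    {a b : (ι → ZMod N) → ℝ} (h : ∀ x, a x ≤ b x) :
    wInner ν a (fun _ => 1) ≤ wInner ν b (fun _ => 1) := by
  unfold wInner
  refine Finset.expect_le_expect (fun x _ => ?_)
  have hW : 0 ≤ ∏ I ∈ Finset.univ.filter (fun I : Finset ι => I ≠ Finset.univ),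
      ν I (fun i => x i.1) :=
    Finset.prod_nonneg (fun I hI => hν I (Finset.mem_filter.mp hI).2 _)
  have := mul_le_mul_of_nonneg_right (h x) hW
  simpa only [mul_one] using this

lemma wInner_add_left (ν : (I : Finset ι) → (I → ZMod N) → ℝ) (a b c : (ι → ZMod N) → ℝ) :
    wInner ν (fun x => a x + b x) c = wInner ν a c + wInner ν b c := by
  unfold wInner
  rw [← Finset.expect_add_distrib]
  exact Finset.expect_congr rfl (fun x _ => by ring)

lemma wInner_sub_left (ν : (I : Finset ι) → (I → ZMod N) → ℝ) (a b c : (ι → ZMod N) → ℝ) :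
    wInner ν (fun x => a x - b x) c = wInner ν a c - wInner ν b c := by
  unfold wInner
  rw [← Finset.expect_sub_distrib]
  exact Finset.expect_congr rfl (fun x _ => by ring)

lemma wInner_smul_left (ν : (I : Finset ι) → (I → ZMod N) → ℝ) (r : ℝ)
    (a c : (ι → ZMod N) → ℝ) :
    wInner ν (fun x => r * a x) c = r * wInner ν a c := by
  unfold wInner
  rw [Finset.mul_expect]
  exact Finset.expect_congr rfl (fun x _ => by ring)

lemma wInner_smul_right (ν : (I : Finset ι) → (I → ZMod N) → ℝ) (r : ℝ)
    (a c : (ι → ZMod N) → ℝ) :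
    wInner ν a (fun x => r * c x) = r * wInner ν a c := by
  unfold wInner
  rw [Finset.mul_expect]
  exact Finset.expect_congr rfl (fun x _ => by ring)

lemma wInner_poly (ν : (I : Finset ι) → (I → ZMod N) → ℝ) (p : Polynomial ℝ)
    (b a : (ι → ZMod N) → ℝ) :
    wInner ν (fun x => Polynomial.eval (b x) p) a
      = ∑ k ∈ Finset.range (p.natDegree + 1),
          p.coeff k * wInner ν (fun x => b x ^ k) a := by
  unfold wInner
  have hpt : ∀ x : ι → ZMod N,
      Polynomial.eval (b x) p * a x *
        (∏ I ∈ Finset.univ.filter (fun I : Finset ι => I ≠ Finset.univ), ν I (fun i => x i.1))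
      = ∑ k ∈ Finset.range (p.natDegree + 1), p.coeff k * (b x ^ k * a x *
          (∏ I ∈ Finset.univ.filter (fun I : Finset ι => I ≠ Finset.univ),
            ν I (fun i => x i.1))) := by
    intro x
    rw [Polynomial.eval_eq_sum_range, Finset.sum_mul, Finset.sum_mul]
    exact Finset.sum_congr rfl (fun k _ => by ring)
  rw [Finset.expect_congr rfl (fun x _ => hpt x), Finset.expect_sum_comm]
  exact Finset.sum_congr rfl (fun k _ => (Finset.mul_expect _ _ _).symm)

end AuxLemmas7
set_option maxHeartbeats 1000000 in
/-- Abstract transference decomposition. -/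
theorem transference_decomposition (d : ℕ) (hd : 1 ≤ d) (T η : ℝ) (hT : 1 < T)
    (hη0 : 0 < η) (hη1 : η < 1) (Cm : ℕ → ℝ) (hCm : ∀ m, 0 < Cm m) :
    ∃ ε : ℝ, 0 < ε ∧ ∀ (N : ℕ) [NeZero N], 1 ≤ N →
    ∀ ν : (I : Finset (Fin d)) → (I → ZMod N) → ℝ,
      (∀ I : Finset (Fin d), I ≠ univ → ∀ z, 0 ≤ ν I z) →
    ∀ νd : (Fin d → ZMod N) → ℝ, (∀ x, 0 ≤ νd x) →
    ∀ Ω : Set (Fin d → ZMod N), HasFaceStructure Ω →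
    (∀ g ∈ STset Ω νd, ∀ x ∈ Ω, |dualFn ν g x| ≤ T) →
    (∀ (m : ℕ) (g : Fin m → ((Fin d → ZMod N) → ℝ)), (∀ j, g j ∈ STset Ω νd) →
      ∀ f : (Fin d → ZMod N) → ℝ, boxNorm ν f ≤ 1 →
        |wInner ν (fun x => ∏ j, dualFn ν (g j) x) f| ≤ Cm m) →
    (∀ f ∈ FT Ω, f ≠ 0 → 0 < wInner ν f (dualFn ν f)) →
    boxNorm ν (fun x => νd x - 1) ≤ ε →
    wInner ν νd (fun _ => 1) ≤ 1 + ε →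
    wInner ν (fun _ => 1) (fun _ => 1) ≤ 1 + ε →
    ∀ f : (Fin d → ZMod N) → ℝ, (∀ x, 0 ≤ f x ∧ f x ≤ νd x) →
    ∃ g h : (Fin d → ZMod N) → ℝ,
      (∀ x ∈ Ω, f x = g x + h x) ∧
      (∀ x ∈ Ω, 0 ≤ g x ∧ g x ≤ 2) ∧
      boxNorm ν (Ω.indicator h) ≤ η := by
  classical
  set κ : ℝ := η ^ (2 ^ d) with hκdef
  have hκ : 0 < κ := pow_pos hη0 _
  obtain ⟨p, hp0, hp⟩ := exists_poly_posPart T (κ/8) (lt_trans one_pos hT) (by positivity)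
  set B : ℝ := ∑ k ∈ Finset.range (p.natDegree + 1), |p.coeff k| * Cm k with hBdef
  have hB0 : 0 ≤ B :=
    Finset.sum_nonneg (fun k _ => mul_nonneg (abs_nonneg _) (hCm k).le)
  set ε : ℝ := min 1 (κ/(2*(B+1))) with hεdef
  have hε0 : 0 < ε := lt_min one_pos (by positivity)
  have hε1 : ε ≤ 1 := min_le_left _ _
  have hεκ : ε ≤ κ/(2*(B+1)) := min_le_right _ _
  refine ⟨ε, hε0, ?_⟩
  intro N instN hN ν hν νd hνd Ω hface hdual hcorr hpos hbox hwν1 hw11 f hf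
  haveI : Nonempty (Fin d) := ⟨⟨0, hd⟩⟩
  -- the compact convex constraint set
  set lo : (Fin d → ZMod N) → ℝ := fun x => if x ∈ Ω then f x - 2 else 0 with hlodef
  set hi : (Fin d → ZMod N) → ℝ := fun x => if x ∈ Ω then f x else 0 with hhidef
  set U : Set ((Fin d → ZMod N) → ℝ) := Set.pi Set.univ (fun x => Set.Icc (lo x) (hi x))
    with hUdef
  have hmemU : ∀ g : (Fin d → ZMod N) → ℝ, g ∈ U ↔ ∀ x, lo x ≤ g x ∧ g x ≤ hi x := by
    intro g
    rw [hUdef, Set.mem_univ_pi]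
    simp only [Set.mem_Icc]
  have hlohi : ∀ x, lo x ≤ hi x := by
    intro x
    simp only [hlodef, hhidef]
    split_ifs with hx
    · linarith
    · exact le_refl _
  have hUne : U.Nonempty := ⟨lo, (hmemU lo).mpr (fun x => ⟨le_refl _, hlohi x⟩)⟩
  have hUcompact : IsCompact U := isCompact_univ_pi (fun x => isCompact_Icc)
  have hGcont : Continuous (fun g : (Fin d → ZMod N) → ℝ => gowersInner ν (fun _ => g)) := by
    unfold gowersInner
    simp only [Finset.expect_eq_sum_div_card]
    apply Continuous.div_const
    apply continuous_finset_sum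
    intro x _
    apply Continuous.div_const
    apply continuous_finset_sum
    intro y _
    exact Continuous.mul
      (continuous_finset_prod Finset.univ
        (fun ω _ => continuous_apply (proj ω x y)))
      (continuous_const : Continuous fun _ : (Fin d → ZMod N) → ℝ => weightProd ν x y)
  obtain ⟨u, huU, humin⟩ := hUcompact.exists_isMinOn hUne hGcont.continuousOn
  have hub := (hmemU u).mp huU
  have hu_supp : ∀ x, x ∉ Ω → u x = 0 := by
    intro x hx
    have h1 := (hub x).1
    have h2 := (hub x).2
    simp only [hlodef, hhidef, if_neg hx] at h1 h2
    linarith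
  have hu_lo : ∀ x ∈ Ω, f x - 2 ≤ u x := by
    intro x hx
    have h1 := (hub x).1
    simp only [hlodef, if_pos hx] at h1
    exact h1
  have hu_hi : ∀ x ∈ Ω, u x ≤ f x := by
    intro x hx
    have h2 := (hub x).2
    simp only [hhidef, if_pos hx] at h2
    exact h2
  have huST : u ∈ STset Ω νd := by
    refine ⟨hu_supp, fun x => ?_⟩
    by_cases hx : x ∈ Ω
    · have h1 := hu_lo x hx
      have h2 := hu_hi x hx
      have h3 := (hf x).1
      have h4 := (hf x).2
      have h5 := hνd x
      rw [abs_le]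
      constructor <;> linarith
    · rw [hu_supp x hx]
      have h5 := hνd x
      rw [abs_zero]
      linarith
  have hDuT : ∀ x ∈ Ω, |dualFn ν u x| ≤ T := fun x hx => hdual u huST x hx
  have hDu0 : ∀ x, x ∉ Ω → dualFn ν u x = 0 := fun x hx =>
    dualFn_eq_zero_of_not_mem ν hface hu_supp hx
  -- the competitor v
  set v : (Fin d → ZMod N) → ℝ :=
    fun x => if x ∈ Ω then (if 0 < dualFn ν u x then f x - 2 else f x) else 0 with hvdef
  have hvb : ∀ x, lo x ≤ v x ∧ v x ≤ hi x := by
    intro x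
    simp only [hvdef, hlodef, hhidef]
    by_cases hx : x ∈ Ω
    · simp only [if_pos hx]
      split_ifs with hq
      · exact ⟨le_refl _, by linarith⟩
      · exact ⟨by linarith, le_refl _⟩
    · simp only [if_neg hx]
      exact ⟨le_refl _, le_refl _⟩
  have hfo : 0 ≤ wInner ν (fun z => v z - u z) (dualFn ν u) := by
    refine min_first_order ν (fun t ht => ?_) humin
    rw [hmemU]
    intro x
    obtain ⟨ht0, ht1⟩ := ht
    have ha := hub x
    have hb := hvb x
    constructor
    · nlinarith [mul_nonneg ht0 (sub_nonneg.mpr hb.1),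
        mul_nonneg (by linarith : (0:ℝ) ≤ 1 - t) (sub_nonneg.mpr ha.1)]
    · nlinarith [mul_nonneg ht0 (sub_nonneg.mpr hb.2),
        mul_nonneg (by linarith : (0:ℝ) ≤ 1 - t) (sub_nonneg.mpr ha.2)]
  have hGu_eq : gowersInner ν (fun _ => u) = wInner ν u (dualFn ν u) := by
    refine Eq.trans ?_ (gowersInner_ite_zero ν u u)
    exact congrArg (gowersInner ν) (funext fun ω => (ite_self u).symm)
  have hstep1 : wInner ν u (dualFn ν u) ≤ wInner ν v (dualFn ν u) := by
    have h := hfo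
    rw [wInner_sub_left] at h
    linarith
  have hstep2 : wInner ν v (dualFn ν u)
      ≤ wInner ν (fun x => if x ∈ Ω then (νd x - 1) * max (dualFn ν u x) 0 else 0)
          (fun _ => 1) := by
    rw [wInner_mul_one]
    refine wInner_one_mono ν hν (fun x => ?_)
    by_cases hx : x ∈ Ω
    · simp only [hvdef, if_pos hx]
      by_cases hq : 0 < dualFn ν u x
      · rw [if_pos hq, max_eq_left hq.le]
        exact mul_le_mul_of_nonneg_right (by linarith [(hf x).2]) hq.le
      · push_neg at hq
        rw [if_neg (not_lt.mpr hq), max_eq_right hq, mul_zero]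
        exact mul_nonpos_of_nonneg_of_nonpos (hf x).1 hq
    · simp only [hvdef, if_neg hx, zero_mul]
      exact le_refl _
  have hstep3 : wInner ν (fun x => if x ∈ Ω then (νd x - 1) * max (dualFn ν u x) 0 else 0)
        (fun _ => 1)
      ≤ wInner ν (fun x => (νd x - 1) * Polynomial.eval (dualFn ν u x) p
          + (κ/8) * (νd x + 1)) (fun _ => 1) := by
    refine wInner_one_mono ν hν (fun x => ?_)
    by_cases hx : x ∈ Ω
    · rw [if_pos hx]
      have hDu := hDuT x hx
      have happx := hp _ ⟨(abs_le.mp hDu).1, (abs_le.mp hDu).2⟩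
      have habsν : |νd x - 1| ≤ νd x + 1 := abs_le.mpr ⟨by linarith [hνd x], by linarith⟩
      have key : (νd x - 1) * (max (dualFn ν u x) 0 - Polynomial.eval (dualFn ν u x) p)
          ≤ (νd x + 1) * (κ/8) := by
        calc (νd x - 1) * (max (dualFn ν u x) 0 - Polynomial.eval (dualFn ν u x) p)
            ≤ |(νd x - 1) * (max (dualFn ν u x) 0 - Polynomial.eval (dualFn ν u x) p)| :=
              le_abs_self _
          _ = |νd x - 1| * |max (dualFn ν u x) 0 - Polynomial.eval (dualFn ν u x) p| :=
              abs_mul _ _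
          _ ≤ (νd x + 1) * (κ/8) := by
              refine mul_le_mul habsν ?_ (abs_nonneg _) (by linarith [hνd x])
              rw [abs_sub_comm]
              exact happx
      nlinarith [key]
    · rw [if_neg hx, hDu0 x hx, hp0, mul_zero, zero_add]
      have h5 := hνd x
      nlinarith [hκ]
  have hsplit : wInner ν (fun x => (νd x - 1) * Polynomial.eval (dualFn ν u x) p
        + (κ/8) * (νd x + 1)) (fun _ => 1)
      = wInner ν (fun x => (νd x - 1) * Polynomial.eval (dualFn ν u x) p) (fun _ => 1)
        + (κ/8) * wInner ν (fun x => νd x + 1) (fun _ => 1) := by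
    rw [wInner_add_left, wInner_smul_left]
  have hmom : wInner ν (fun x => νd x + 1) (fun _ => 1) ≤ 4 := by
    have hadd : wInner ν (fun x => νd x + 1) (fun _ => 1)
        = wInner ν νd (fun _ => 1) + wInner ν (fun _ => 1) (fun _ => 1) :=
      wInner_add_left ν νd (fun _ => 1) (fun _ => 1)
    rw [hadd]
    linarith
  have hpoly : wInner ν (fun x => (νd x - 1) * Polynomial.eval (dualFn ν u x) p) (fun _ => 1)
      = ∑ k ∈ Finset.range (p.natDegree + 1),
          p.coeff k * wInner ν (fun x => dualFn ν u x ^ k) (fun x => νd x - 1) := by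
    have h1 : wInner ν (fun x => (νd x - 1) * Polynomial.eval (dualFn ν u x) p) (fun _ => 1)
        = wInner ν (fun x => Polynomial.eval (dualFn ν u x) p) (fun x => νd x - 1) := by
      unfold wInner
      exact Finset.expect_congr rfl (fun x _ => by ring)
    rw [h1, wInner_poly]
  have hcork : ∀ k : ℕ,
      |wInner ν (fun x => dualFn ν u x ^ k) (fun x => νd x - 1)| ≤ Cm k * ε := by
    intro k
    have hGν : 0 ≤ gowersInner ν (fun _ => (fun x => νd x - 1)) :=
      gowersInner_self_nonneg ν hν _
    have hboxsc : boxNorm ν (fun x => ε⁻¹ * (νd x - 1)) ≤ 1 := by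
      rw [boxNorm_smul ν (fun x => νd x - 1) (inv_nonneg.mpr hε0.le) hGν]
      calc ε⁻¹ * boxNorm ν (fun x => νd x - 1) ≤ ε⁻¹ * ε :=
            mul_le_mul_of_nonneg_left hbox (inv_nonneg.mpr hε0.le)
        _ = 1 := inv_mul_cancel₀ (ne_of_gt hε0)
    have happly := hcorr k (fun _ => u) (fun _ => huST) (fun x => ε⁻¹ * (νd x - 1)) hboxsc
    have heq : wInner ν (fun x => ∏ _j : Fin k, dualFn ν u x) (fun x => ε⁻¹ * (νd x - 1))
        = ε⁻¹ * wInner ν (fun x => dualFn ν u x ^ k) (fun x => νd x - 1) := by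
      rw [wInner_smul_right]
      congr 1
      refine congrArg (fun F => wInner ν F (fun x => νd x - 1)) ?_
      funext x
      rw [Finset.prod_const, Finset.card_univ, Fintype.card_fin]
    rw [heq] at happly
    rw [abs_mul, abs_inv, abs_of_pos hε0] at happly
    calc |wInner ν (fun x => dualFn ν u x ^ k) (fun x => νd x - 1)|
        = ε⁻¹ * |wInner ν (fun x => dualFn ν u x ^ k) (fun x => νd x - 1)| * ε := by
          field_simp
      _ ≤ Cm k * ε := mul_le_mul_of_nonneg_right happly hε0.le
  have hsum : (∑ k ∈ Finset.range (p.natDegree + 1),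
      p.coeff k * wInner ν (fun x => dualFn ν u x ^ k) (fun x => νd x - 1)) ≤ ε * B := by
    calc (∑ k ∈ Finset.range (p.natDegree + 1),
        p.coeff k * wInner ν (fun x => dualFn ν u x ^ k) (fun x => νd x - 1))
        ≤ ∑ k ∈ Finset.range (p.natDegree + 1),
            |p.coeff k * wInner ν (fun x => dualFn ν u x ^ k) (fun x => νd x - 1)| :=
          Finset.sum_le_sum (fun k _ => le_abs_self _)
      _ ≤ ∑ k ∈ Finset.range (p.natDegree + 1), |p.coeff k| * (Cm k * ε) := by
          refine Finset.sum_le_sum (fun k _ => ?_)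
          rw [abs_mul]
          exact mul_le_mul_of_nonneg_left (hcork k) (abs_nonneg _)
      _ = ε * B := by
          rw [hBdef, Finset.mul_sum]
          exact Finset.sum_congr rfl (fun k _ => by ring)
  have hεB : ε * B ≤ κ/2 := by
    have h1 : ε * B ≤ (κ/(2*(B+1))) * B := mul_le_mul_of_nonneg_right hεκ hB0
    have h2 : (κ/(2*(B+1))) * B ≤ κ/2 := by
      rw [div_mul_eq_mul_div, div_le_div_iff₀ (by positivity) (by norm_num)]
      nlinarith [hκ.le, hB0]
    linarith
  have hGuκ : gowersInner ν (fun _ => u) ≤ κ := by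
    calc gowersInner ν (fun _ => u) = wInner ν u (dualFn ν u) := hGu_eq
      _ ≤ wInner ν v (dualFn ν u) := hstep1
      _ ≤ wInner ν (fun x => if x ∈ Ω then (νd x - 1) * max (dualFn ν u x) 0 else 0)
            (fun _ => 1) := hstep2
      _ ≤ wInner ν (fun x => (νd x - 1) * Polynomial.eval (dualFn ν u x) p
            + (κ/8) * (νd x + 1)) (fun _ => 1) := hstep3
      _ = wInner ν (fun x => (νd x - 1) * Polynomial.eval (dualFn ν u x) p) (fun _ => 1)
            + (κ/8) * wInner ν (fun x => νd x + 1) (fun _ => 1) := hsplit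
      _ ≤ ε * B + (κ/8) * 4 := by
          refine add_le_add ?_ (mul_le_mul_of_nonneg_left hmom (by positivity))
          rw [hpoly]
          exact hsum
      _ ≤ κ/2 + κ/2 := by
          refine add_le_add hεB ?_
          linarith
      _ = κ := by ring
  refine ⟨fun x => f x - u x, u, ?_, ?_, ?_⟩
  · intro x _
    show f x = (f x - u x) + u x
    ring
  · intro x hx
    constructor
    · show 0 ≤ f x - u x
      linarith [hu_hi x hx]
    · show f x - u x ≤ 2
      linarith [hu_lo x hx]
  · have hind : Ω.indicator u = u := by
      funext x
      rw [Set.indicator_apply]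
      split_ifs with hx
      · rfl
      · exact (hu_supp x hx).symm
    rw [hind]
    refine boxNorm_le_of_gowersInner_le ν u hη0.le ?_ (gowersInner_self_nonneg ν hν u)
    simp only [Fintype.card_fin]
    exact hGuκ

end
end

section
/- (Transference principle.) For every d ≥ 1, every T > 1, every η ∈ (0,1), every κ > 0 and every function C : ℕ → (0,∞) there exists ε > 0 such that the following holds for every N ≥ 1. Let ν_I : (ZMod N)^I → ℝ for I ⊊ {1,…,d} be nonnegative weights, let ν_{[d]} : (ZMod N)^d → ℝ be nonnegative, and let Ω ⊆ (ZMod N)^d have face structure. Assume: (i) |Dg(x)| ≤ T for every g ∈ S_T and every x ∈ Ω; (ii) for every m ≥ 0 and all g_1,…,g_m ∈ S_T, |⟨∏_{j=1}^m Dg_j, f⟩_ν| ≤ C(m) whenever ‖f‖_{□,ν} ≤ 1; (iii) ⟨f, Df⟩_ν > 0 for every nonzero f ∈ F_T; (iv) ‖ν_{[d]} − 1‖_{□,ν} ≤ ε, ⟨ν_{[d]}, 1⟩_ν ≤ 1 + ε and ⟨1, 1⟩_ν ≤ 1 + ε; (v) ⟨ν_{[d]}·1_{Ω^c}, 1⟩_ν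 ≤ κ. Then for every f : (ZMod N)^d → ℝ with 0 ≤ f ≤ ν_{[d]} pointwise there exist f_1, f_2, f_3 : (ZMod N)^d → ℝ such that f = f_1 + f_2 + f_3, 0 ≤ f_1 ≤ 2 pointwise with f_1 vanishing outside Ω, ‖f_2‖_{□,ν} ≤ η with f_2 vanishing outside Ω, and 0 ≤ f_3 ≤ ν_{[d]} pointwise with f_3 vanishing on Ω and ⟨f_3, 1⟩_ν ≤ κ. -/
set_option linter.unusedSectionVars false
set_option maxHeartbeats 1000000

noncomputable section
open Finset
open scoped Pointwise

namespace Transfer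

variable {ι : Type*} [Fintype ι] [DecidableEq ι] {N : ℕ} [NeZero N]
  {ν : (I : Finset ι) → (I → ZMod N) → ℝ}

/-- the weight appearing in the inner product -/
def wt (ν : (I : Finset ι) → (I → ZMod N) → ℝ) (x : ι → ZMod N) : ℝ :=
  ∏ I ∈ univ.filter (fun I : Finset ι => I ≠ univ), ν I (fun i => x i.1)

/-- the weight appearing in the dual function -/
def dwt (ν : (I : Finset ι) → (I → ZMod N) → ℝ) (x y : ι → ZMod N) : ℝ :=
  ∏ I ∈ univ.filter (fun I : Finset ι => I ≠ univ),
    ∏ ω ∈ univ.filter (fun ω : I → Bool => ω ≠ fun _ => false), ν I (projI ω x y)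

lemma wInner_def (f g : (ι → ZMod N) → ℝ) :
    wInner ν f g = Finset.expect Finset.univ fun x => f x * g x * wt ν x := rfl

lemma wt_nonneg (hν : ∀ I : Finset ι, I ≠ univ → ∀ z, 0 ≤ ν I z) (x : ι → ZMod N) :
    0 ≤ wt ν x := by
  refine Finset.prod_nonneg fun I hI => hν I (by simpa using hI) _

lemma wInner_comm (f g : (ι → ZMod N) → ℝ) : wInner ν f g = wInner ν g f := by
  simp only [wInner_def]
  exact Finset.expect_congr rfl fun x _ => by ring

lemma wInner_mono (hν : ∀ I : Finset ι, I ≠ univ → ∀ z, 0 ≤ ν I z)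
    {f g f' g' : (ι → ZMod N) → ℝ} (h : ∀ x, f x * g x ≤ f' x * g' x) :
    wInner ν f g ≤ wInner ν f' g' := by
  simp only [wInner_def]
  exact Finset.expect_le_expect fun x _ =>
    mul_le_mul_of_nonneg_right (h x) (wt_nonneg hν x)

lemma wInner_congr {f g f' g' : (ι → ZMod N) → ℝ} (h : ∀ x, f x * g x = f' x * g' x) :
    wInner ν f g = wInner ν f' g' := by
  simp only [wInner_def]
  exact Finset.expect_congr rfl fun x _ => by rw [h x]

lemma wInner_add_right (f g g' : (ι → ZMod N) → ℝ) :
    wInner ν f (fun x => g x + g' x) = wInner ν f g + wInner ν f g' := by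
  simp only [wInner_def, ← Finset.expect_add_distrib]
  exact Finset.expect_congr rfl fun x _ => by ring

lemma wInner_smul_right (c : ℝ) (f g : (ι → ZMod N) → ℝ) :
    wInner ν f (fun x => c * g x) = c * wInner ν f g := by
  simp only [wInner_def, Finset.mul_expect]
  exact Finset.expect_congr rfl fun x _ => by ring

lemma wInner_sum_right {α : Type*} (s : Finset α) (F : α → (ι → ZMod N) → ℝ)
    (f : (ι → ZMod N) → ℝ) :
    wInner ν f (fun x => ∑ i ∈ s, F i x) = ∑ i ∈ s, wInner ν f (F i) := by
  simp only [wInner_def, ← Finset.expect_sum_comm]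
  refine Finset.expect_congr rfl fun x _ => ?_
  rw [Finset.mul_sum, Finset.sum_mul]

lemma proj_false (x y : ι → ZMod N) : proj (fun _ => false) x y = x := by
  funext i; simp [proj]

lemma projI_false {I : Finset ι} (x y : ι → ZMod N) :
    projI (fun _ => false : I → Bool) x y = fun i => x i.1 := by
  funext i; simp [projI]

lemma weightProd_split (x y : ι → ZMod N) :
    weightProd ν x y = wt ν x * dwt ν x y := by
  unfold weightProd wt dwt
  rw [← Finset.prod_mul_distrib]
  refine Finset.prod_congr rfl fun I _ => ?_
  rw [Finset.filter_ne']
  rw [← Finset.mul_prod_erase univ _ (Finset.mem_univ (fun _ => false : I → Bool))]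
  rw [projI_false]

lemma prod_cube_split (f : (ι → ZMod N) → ℝ) (x y : ι → ZMod N) :
    (∏ ω : ι → Bool, f (proj ω x y)) =
      f x * ∏ ω ∈ univ.filter (fun ω : ι → Bool => ω ≠ fun _ => false), f (proj ω x y) := by
  rw [Finset.filter_ne']
  rw [← Finset.mul_prod_erase univ _ (Finset.mem_univ (fun _ => false : ι → Bool))]
  rw [proj_false]

lemma wInner_dualFn_self (f : (ι → ZMod N) → ℝ) :
    wInner ν f (dualFn ν f) = gowersInner ν (fun _ => f) := by
  unfold wInner dualFn gowersInner
  refine Finset.expect_congr rfl fun x _ => ?_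
  rw [show (∏ I ∈ univ.filter (fun I : Finset ι => I ≠ univ), ν I (fun i => x i.1)) = wt ν x
    from rfl]
  rw [mul_comm (f x) _, mul_assoc, Finset.expect_mul]
  refine Finset.expect_congr rfl fun y _ => ?_
  rw [weightProd_split, prod_cube_split]
  unfold dwt
  ring

lemma gowersInner_smul (c : ℝ) (f : (ι → ZMod N) → ℝ) :
    gowersInner ν (fun _ => fun x => c * f x) =
      c ^ (2 ^ Fintype.card ι) * gowersInner ν (fun _ => f) := by
  unfold gowersInner
  rw [Finset.mul_expect]
  refine Finset.expect_congr rfl fun x _ => ?_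
  rw [Finset.mul_expect]
  refine Finset.expect_congr rfl fun y _ => ?_
  rw [Finset.prod_mul_distrib, Finset.prod_const, card_univ]
  have : Fintype.card (ι → Bool) = 2 ^ Fintype.card ι := by
    rw [Fintype.card_fun, Fintype.card_bool]
  rw [this]; ring

lemma gowersInner_zero [Nonempty ι] :
    gowersInner ν (fun _ => fun _ => (0 : ℝ)) = 0 := by
  unfold gowersInner
  refine Finset.expect_eq_zero fun x _ => Finset.expect_eq_zero fun y _ => ?_
  rw [Finset.prod_eq_zero (Finset.mem_univ (fun _ => false : ι → Bool)) rfl, zero_mul]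

lemma boxNorm_smul [Nonempty ι] {c : ℝ} (hc : 0 ≤ c) (f : (ι → ZMod N) → ℝ) :
    boxNorm ν (fun x => c * f x) = c * boxNorm ν f := by
  unfold boxNorm
  rw [gowersInner_smul]
  set G := gowersInner ν (fun _ => f) with hG
  set e : ℝ := ((2 : ℝ) ^ (Fintype.card ι))⁻¹ with he
  have he0 : 0 < e := by positivity
  have hepow : ((2 ^ Fintype.card ι : ℕ) : ℝ) * e = 1 := by
    rw [he]; push_cast; exact mul_inv_cancel₀ (by positivity)
  have hcpow : (c ^ (2 ^ Fintype.card ι) : ℝ) ^ e = c := by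
    rw [← Real.rpow_natCast c (2 ^ Fintype.card ι), ← Real.rpow_mul hc, hepow, Real.rpow_one]
  rcases eq_or_lt_of_le hc with hc0 | hcpos
  · rw [← hc0]
    rw [zero_pow (by positivity : 2 ^ Fintype.card ι ≠ 0), zero_mul, zero_mul,
      Real.zero_rpow (ne_of_gt he0)]
  rcases le_or_gt 0 G with hGpos | hGneg
  · rw [Real.mul_rpow (by positivity) hGpos, hcpow]
  · have h1 : c ^ 2 ^ Fintype.card ι * G < 0 :=
      mul_neg_of_pos_of_neg (by positivity) hGneg
    rw [Real.rpow_def_of_neg h1, Real.rpow_def_of_neg hGneg]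
    rw [Real.log_mul (by positivity) (ne_of_lt hGneg)]
    rw [add_mul, Real.exp_add]
    have : Real.exp (Real.log (c ^ 2 ^ Fintype.card ι) * e) = c := by
      rw [← Real.rpow_def_of_pos (by positivity), hcpow]
    rw [this]; ring

lemma boxNorm_le_of_le {f : (ι → ZMod N) → ℝ} {η : ℝ} (hη : 0 < η)
    (hG0 : 0 ≤ gowersInner ν (fun _ => f))
    (hGle : gowersInner ν (fun _ => f) ≤ η ^ (2 ^ Fintype.card ι)) :
    boxNorm ν f ≤ η := by
  unfold boxNorm
  set e : ℝ := ((2 : ℝ) ^ (Fintype.card ι))⁻¹ with he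
  have he0 : 0 < e := by positivity
  have hepow : ((2 ^ Fintype.card ι : ℕ) : ℝ) * e = 1 := by
    rw [he]; push_cast; exact mul_inv_cancel₀ (by positivity)
  calc (gowersInner ν (fun _ => f)) ^ e ≤ (η ^ (2 ^ Fintype.card ι) : ℝ) ^ e :=
        Real.rpow_le_rpow hG0 hGle he0.le
    _ = η := by
        rw [← Real.rpow_natCast η (2 ^ Fintype.card ι), ← Real.rpow_mul hη.le, hepow,
          Real.rpow_one]

lemma dualFn_eq_zero_of_not_mem {Ω : Set (ι → ZMod N)} (hface : HasFaceStructure Ω)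
    {h : (ι → ZMod N) → ℝ} (hh : ∀ x, x ∉ Ω → h x = 0) {x : ι → ZMod N} (hx : x ∉ Ω) :
    dualFn ν h x = 0 := by
  obtain ⟨ΩJ, hmono, hΩeq⟩ := hface
  have hx' : ∃ J : Finset ι, (J ≠ ∅ ∧ J ≠ univ) ∧ x ∉ ΩJ J := by
    by_contra hc
    push_neg at hc
    exact hx (by rw [hΩeq]; exact Set.mem_iInter₂.2 fun J hJ => hc J ⟨Finset.nonempty_iff_ne_empty.2 hJ.1, hJ.2⟩)
  obtain ⟨J, ⟨hJ0, hJu⟩, hxJ⟩ := hx'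
  unfold dualFn
  refine Finset.expect_eq_zero fun y _ => ?_
  have hmem : (fun i => decide (i ∈ J)) ∈
      univ.filter (fun ω : ι → Bool => ω ≠ fun _ => false) := by
    rw [Finset.mem_filter]
    refine ⟨Finset.mem_univ _, fun hcon => ?_⟩
    obtain ⟨j, hj⟩ := Finset.nonempty_iff_ne_empty.2 hJ0
    have := congrFun hcon j
    simp [hj] at this
  have hzero : h (proj (fun i => decide (i ∈ J)) x y) = 0 := by
    apply hh
    intro hconmem
    apply hxJ
    have hPJ : proj (fun i => decide (i ∈ J)) x y ∈ ΩJ J := by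
      rw [hΩeq] at hconmem
      exact Set.mem_iInter₂.1 hconmem J ⟨hJ0, hJu⟩
    refine hmono J hJ0 hJu _ x (fun i hi => ?_) hPJ
    simp [proj, hi]
  rw [Finset.prod_eq_zero hmem hzero, zero_mul]

lemma dualFn_zero [Nonempty ι] (x : ι → ZMod N) :
    dualFn ν (fun _ => (0 : ℝ)) x = 0 := by
  unfold dualFn
  refine Finset.expect_eq_zero fun y _ => ?_
  have hmem : (fun _ => true : ι → Bool) ∈
      univ.filter (fun ω : ι → Bool => ω ≠ fun _ => false) := by
    rw [Finset.mem_filter]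
    refine ⟨Finset.mem_univ _, fun hcon => ?_⟩
    have := congrFun hcon (Classical.arbitrary ι)
    simp at this
  rw [Finset.prod_eq_zero hmem rfl, zero_mul]

lemma exists_poly_near_posPart (T δ : ℝ) (hT : 0 < T) (hδ : 0 < δ) :
    ∃ Q : Polynomial ℝ, ∀ t : ℝ, |t| ≤ T → |Q.eval t - max t 0| ≤ δ := by
  obtain ⟨p, hp⟩ := exists_polynomial_near_of_continuousOn (-T) T (fun t => max t 0)
    ((continuous_id.max continuous_const).continuousOn) δ hδ
  refine ⟨p, fun t ht => ?_⟩
  have h := abs_le.1 ht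
  exact (hp t ⟨by linarith [h.1], h.2⟩).le

end Transfer

/-- Transference principle. -/
theorem transference_principle (d : ℕ) (hd : 1 ≤ d) (T η κ : ℝ) (hT : 1 < T)
    (hη0 : 0 < η) (hη1 : η < 1) (hκ : 0 < κ) (Cm : ℕ → ℝ) (hCm : ∀ m, 0 < Cm m) :
    ∃ ε : ℝ, 0 < ε ∧ ∀ (N : ℕ) [NeZero N], 1 ≤ N →
    ∀ ν : (I : Finset (Fin d)) → (I → ZMod N) → ℝ,
      (∀ I : Finset (Fin d), I ≠ univ → ∀ z, 0 ≤ ν I z) →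
    ∀ νd : (Fin d → ZMod N) → ℝ, (∀ x, 0 ≤ νd x) →
    ∀ Ω : Set (Fin d → ZMod N), HasFaceStructure Ω →
    (∀ g ∈ STset Ω νd, ∀ x ∈ Ω, |dualFn ν g x| ≤ T) →
    (∀ (m : ℕ) (g : Fin m → ((Fin d → ZMod N) → ℝ)), (∀ j, g j ∈ STset Ω νd) →
      ∀ f : (Fin d → ZMod N) → ℝ, boxNorm ν f ≤ 1 →
        |wInner ν (fun x => ∏ j, dualFn ν (g j) x) f| ≤ Cm m) →
    (∀ f ∈ FT Ω, f ≠ 0 → 0 < wInner ν f (dualFn ν f)) →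
    boxNorm ν (fun x => νd x - 1) ≤ ε →
    wInner ν νd (fun _ => 1) ≤ 1 + ε →
    wInner ν (fun _ => 1) (fun _ => 1) ≤ 1 + ε →
    wInner ν (Ωᶜ.indicator νd) (fun _ => 1) ≤ κ →
    ∀ f : (Fin d → ZMod N) → ℝ, (∀ x, 0 ≤ f x ∧ f x ≤ νd x) →
    ∃ f₁ f₂ f₃ : (Fin d → ZMod N) → ℝ,
      f = f₁ + f₂ + f₃ ∧
      (∀ x, 0 ≤ f₁ x ∧ f₁ x ≤ 2) ∧ (∀ x, x ∉ Ω → f₁ x = 0) ∧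
      boxNorm ν f₂ ≤ η ∧ (∀ x, x ∉ Ω → f₂ x = 0) ∧
      (∀ x, 0 ≤ f₃ x ∧ f₃ x ≤ νd x) ∧ (∀ x ∈ Ω, f₃ x = 0) ∧
      wInner ν f₃ (fun _ => 1) ≤ κ := by
  classical
  have hT0 : (0 : ℝ) < T := lt_trans one_pos hT
  set lam : ℝ := η ^ (2 ^ d) with hlam_def
  have hlam0 : 0 < lam := by positivity
  obtain ⟨Q, hQ⟩ := Transfer.exists_poly_near_posPart T (lam / 24) hT0 (by positivity)
  set A : ℝ := ∑ k ∈ Finset.range (Q.natDegree + 1), |Q.coeff k| * Cm k with hA_def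
  have hA0 : 0 ≤ A :=
    Finset.sum_nonneg fun k _ => mul_nonneg (abs_nonneg _) (hCm k).le
  refine ⟨min (lam / (8 * (A + 1))) (1 / 2), lt_min (by positivity) (by norm_num), ?_⟩
  intro N _ hN ν hν νd hνd Ω hface hyp1 hyp2 hyp3 hbox hint1 hint2 hout f hf
  set ε : ℝ := min (lam / (8 * (A + 1))) (1 / 2) with hε_def
  have hε0 : 0 < ε := lt_min (by positivity) (by norm_num)
  have hεhalf : ε ≤ 1 / 2 := min_le_right _ _
  have hεA : A * ε ≤ lam / 8 := by
    have h1 : A * ε ≤ A * (lam / (8 * (A + 1))) :=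
      mul_le_mul_of_nonneg_left (min_le_left _ _) hA0
    have h2 : A * (lam / (8 * (A + 1))) ≤ lam / 8 := by
      rw [mul_div_assoc']
      rw [div_le_div_iff₀ (by positivity) (by norm_num)]
      nlinarith [hA0, hlam0.le]
    linarith
  haveI : Nonempty (Fin d) := ⟨⟨0, by omega⟩⟩
  set g₀ : (Fin d → ZMod N) → ℝ := fun x => if x ∈ Ω then f x else 0 with hg₀_def
  have hg₀supp : ∀ x, x ∉ Ω → g₀ x = 0 := fun x hx => by simp [hg₀_def, hx]
  have hg₀bounds : ∀ x, 0 ≤ g₀ x ∧ g₀ x ≤ νd x := by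
    intro x
    by_cases hx : x ∈ Ω
    · simpa [hg₀_def, hx] using hf x
    · simp [hg₀_def, hx, hνd x]
  set K₁ : Set ((Fin d → ZMod N) → ℝ) :=
    {a | (∀ x, 0 ≤ a x ∧ a x ≤ 2) ∧ ∀ x, x ∉ Ω → a x = 0} with hK₁_def
  set B : Set ((Fin d → ZMod N) → ℝ) :=
    {b | (∀ x, x ∉ Ω → b x = 0) ∧ ∀ h ∈ STset Ω νd, wInner ν b (dualFn ν h) ≤ lam}
    with hB_def
  by_cases hg₀K : g₀ ∈ K₁ + B
  · -- extract decomposition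
    rw [Set.mem_add] at hg₀K
    obtain ⟨a, ha, b, hb, hab⟩ := hg₀K
    have hab' : ∀ x, a x + b x = g₀ x := fun x => congrFun hab x
    refine ⟨a, b, fun x => if x ∈ Ω then 0 else f x, ?_, ha.1, ha.2, ?_, hb.1, ?_, ?_, ?_⟩
    · funext x
      simp only [Pi.add_apply]
      by_cases hx : x ∈ Ω
      · rw [if_pos hx]
        have := hab' x
        rw [hg₀_def] at this
        simp only [if_pos hx] at this
        linarith
      · rw [if_neg hx, ha.2 x hx, hb.1 x hx]
        ring
    · -- boxNorm b ≤ η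
      have hbS : b ∈ STset Ω νd := by
        refine ⟨hb.1, fun x => ?_⟩
        have hx := hab' x
        have h1 : |b x| ≤ |g₀ x| + |a x| := by
          have hbx : b x = g₀ x - a x := by linarith
          rw [hbx, sub_eq_add_neg]
          exact (abs_add_le _ _).trans (by rw [abs_neg])
        have hg := hg₀bounds x
        have haK := ha.1 x
        rw [abs_of_nonneg hg.1, abs_of_nonneg haK.1] at h1
        linarith [hg.2, haK.2]
      have hquad : wInner ν b (dualFn ν b) ≤ lam := hb.2 b hbS
      have hGid := Transfer.wInner_dualFn_self (ν := ν) b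
      have hG0 : 0 ≤ gowersInner ν (fun _ => b) := by
        by_cases hb0 : b = 0
        · have : gowersInner ν (fun _ => b) = 0 := by
            rw [hb0]
            exact Transfer.gowersInner_zero
          rw [this]
        · have := hyp3 b hb.1 hb0
          linarith [hGid ▸ this]
      refine Transfer.boxNorm_le_of_le hη0 hG0 ?_
      have haux : gowersInner ν (fun _ => b) ≤ lam := by
        rw [← hGid]; exact hquad
      simpa [Fintype.card_fin, ← hlam_def] using haux
    · -- f₃ bounds
      intro x
      by_cases hx : x ∈ Ω
      · simp [hx, hνd x]
      · simpa [hx] using hf x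
    · intro x hx
      simp [hx]
    · -- wInner f₃ 1 ≤ κ
      refine le_trans (Transfer.wInner_mono hν fun x => ?_) hout
      by_cases hx : x ∈ Ω
      · have : x ∉ Ωᶜ := fun hc => hc hx
        rw [if_pos hx, Set.indicator_of_notMem this]
      · have : x ∈ Ωᶜ := hx
        rw [if_neg hx, Set.indicator_of_mem this]
        simpa using (hf x).2
  · -- contradiction branch
    exfalso
    have hclosed_support : IsClosed {a : (Fin d → ZMod N) → ℝ | ∀ x, x ∉ Ω → a x = 0} := by
      have he : {a : (Fin d → ZMod N) → ℝ | ∀ x, x ∉ Ω → a x = 0} =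
          ⋂ x ∈ Ωᶜ, {a : (Fin d → ZMod N) → ℝ | a x = 0} := by
        ext a
        simp only [Set.mem_setOf_eq, Set.mem_iInter, Set.mem_compl_iff]
      rw [he]
      exact isClosed_biInter fun x _ => isClosed_eq (continuous_apply x) continuous_const
    have hK₁conv : Convex ℝ K₁ := by
      intro a ha b hb s t hs ht hst
      constructor
      · intro x
        have h1 := ha.1 x
        have h2 := hb.1 x
        have he : (s • a + t • b) x = s * a x + t * b x := by
          simp [smul_eq_mul]
        rw [he]
        constructor
        · nlinarith [h1.1, h2.1]
        · nlinarith [h1.2, h2.2]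
      · intro x hx
        have he : (s • a + t • b) x = s * a x + t * b x := by
          simp [smul_eq_mul]
        rw [he, ha.2 x hx, hb.2 x hx]
        ring
    have hK₁closed : IsClosed K₁ := by
      have he : K₁ = {a : (Fin d → ZMod N) → ℝ | ∀ x, 0 ≤ a x ∧ a x ≤ 2} ∩
          {a | ∀ x, x ∉ Ω → a x = 0} := rfl
      rw [he]
      refine IsClosed.inter ?_ hclosed_support
      have he2 : {a : (Fin d → ZMod N) → ℝ | ∀ x, 0 ≤ a x ∧ a x ≤ 2} =
          ⋂ x, ({a : (Fin d → ZMod N) → ℝ | 0 ≤ a x} ∩ {a | a x ≤ 2}) := by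
        ext a
        simp only [Set.mem_setOf_eq, Set.mem_iInter, Set.mem_inter_iff]
      rw [he2]
      exact isClosed_iInter fun x => (isClosed_le continuous_const (continuous_apply x)).inter
        (isClosed_le (continuous_apply x) continuous_const)
    have hK₁compact : IsCompact K₁ := by
      refine Metric.isCompact_of_isClosed_isBounded hK₁closed ?_
      rw [isBounded_iff_forall_norm_le]
      refine ⟨2, fun a ha => ?_⟩
      rw [pi_norm_le_iff_of_nonneg (by norm_num : (0:ℝ) ≤ 2)]
      intro x
      rw [Real.norm_eq_abs, abs_le]
      exact ⟨by linarith [(ha.1 x).1], (ha.1 x).2⟩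
    have hwInner_cont : ∀ g : (Fin d → ZMod N) → ℝ, Continuous fun b => wInner ν b g := by
      intro g
      have he : (fun b : (Fin d → ZMod N) → ℝ => wInner ν b g) =
          fun b => (∑ x, b x * g x * Transfer.wt ν x) / (Fintype.card (Fin d → ZMod N) : ℝ) := by
        funext b
        rw [Transfer.wInner_def, Fintype.expect_eq_sum_div_card]
      rw [he]
      exact (continuous_finset_sum _ fun x _ =>
        ((continuous_apply x).mul continuous_const).mul continuous_const).div_const _
    have hBclosed : IsClosed B := by
      have he : B = {b : (Fin d → ZMod N) → ℝ | ∀ x, x ∉ Ω → b x = 0} ∩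
          ⋂ (h : (Fin d → ZMod N) → ℝ) (_ : h ∈ STset Ω νd),
            {b | wInner ν b (dualFn ν h) ≤ lam} := by
        ext b
        simp only [hB_def, Set.mem_setOf_eq, Set.mem_inter_iff, Set.mem_iInter]
      rw [he]
      exact hclosed_support.inter (isClosed_biInter fun h _ =>
        isClosed_le (hwInner_cont _) continuous_const)
    have hBconv : Convex ℝ B := by
      intro a ha b hb s t hs ht hst
      have hesum : ∀ g, wInner ν (s • a + t • b) (dualFn ν g) =
          s * wInner ν a (dualFn ν g) + t * wInner ν b (dualFn ν g) := by
        intro g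
        rw [Transfer.wInner_def, Transfer.wInner_def, Transfer.wInner_def]
        rw [Finset.mul_expect, Finset.mul_expect, ← Finset.expect_add_distrib]
        refine Finset.expect_congr rfl fun x _ => ?_
        simp only [Pi.add_apply, Pi.smul_apply, smul_eq_mul]
        ring
      constructor
      · intro x hx
        have he : (s • a + t • b) x = s * a x + t * b x := by simp [smul_eq_mul]
        rw [he, ha.1 x hx, hb.1 x hx]
        ring
      · intro g hg
        rw [hesum g]
        nlinarith [mul_le_mul_of_nonneg_left (ha.2 g hg) hs,
          mul_le_mul_of_nonneg_left (hb.2 g hg) ht]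
    have hKclosed : IsClosed (K₁ + B) := IsClosed.add_left_of_isCompact hBclosed hK₁compact
    have hKconv : Convex ℝ (K₁ + B) := hK₁conv.add hBconv
    obtain ⟨L, u, hLK, hLg⟩ := geometric_hahn_banach_closed_point hKconv hKclosed hg₀K
    have hzeroK₁ : (0 : (Fin d → ZMod N) → ℝ) ∈ K₁ :=
      ⟨fun x => by norm_num, fun x _ => rfl⟩
    have hwInner_zero : ∀ g, wInner ν (0 : (Fin d → ZMod N) → ℝ) g = 0 := by
      intro g
      rw [Transfer.wInner_def]
      exact Finset.expect_eq_zero fun x _ => by simp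
    have hzeroB : (0 : (Fin d → ZMod N) → ℝ) ∈ B :=
      ⟨fun x _ => rfl, fun h _ => by rw [hwInner_zero]; exact hlam0.le⟩
    have hu0 : 0 < u := by
      have h0 := hLK 0 (by simpa using Set.add_mem_add hzeroK₁ hzeroB)
      simpa using h0
    set bas : (Fin d → ZMod N) → ((Fin d → ZMod N) → ℝ) :=
      fun x => fun j => if x = j then 1 else 0 with hbas_def
    have hexp : ∀ (L' : ((Fin d → ZMod N) → ℝ) →L[ℝ] ℝ) (a : (Fin d → ZMod N) → ℝ),
        L' a = ∑ x, a x * L' (bas x) := by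
      intro L' a
      conv_lhs => rw [pi_eq_sum_univ a]
      rw [map_sum]
      exact Finset.sum_congr rfl fun x _ => by rw [map_smul, smul_eq_mul]
    set ell : (Fin d → ZMod N) → ℝ := fun x => if x ∈ Ω then L (bas x) else 0 with hell_def
    have hLsupp : ∀ a : (Fin d → ZMod N) → ℝ, (∀ x, x ∉ Ω → a x = 0) →
        L a = ∑ x, a x * ell x := by
      intro a ha
      rw [hexp L a]
      refine Finset.sum_congr rfl fun x _ => ?_
      by_cases hx : x ∈ Ω
      · rw [hell_def]
        simp only [if_pos hx]
      · rw [ha x hx]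
        ring
    set cX : ℝ := (Fintype.card (Fin d → ZMod N) : ℝ) with hcX_def
    have hcX0 : 0 < cX := by
      rw [hcX_def]
      exact_mod_cast Fintype.card_pos
    set uh : ((Fin d → ZMod N) → ℝ) → ((Fin d → ZMod N) → ℝ) :=
      fun h => fun x => Transfer.wt ν x * dualFn ν h x / (lam * cX) with huh_def
    have hpair : ∀ (b g : (Fin d → ZMod N) → ℝ),
        (∑ x, b x * (Transfer.wt ν x * g x / (lam * cX))) = wInner ν b g / lam := by
      intro b g
      rw [Transfer.wInner_def, Fintype.expect_eq_sum_div_card, ← hcX_def, div_div,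
        Finset.sum_div]
      refine Finset.sum_congr rfl fun x _ => ?_
      field_simp
    set S₀ : Set ((Fin d → ZMod N) → ℝ) := uh '' (STset Ω νd) with hS₀_def
    have hzeroST : (fun _ => (0:ℝ)) ∈ STset Ω νd :=
      ⟨fun x _ => rfl, fun x => by simp only [abs_zero]; linarith [hνd x]⟩
    have huh_zero : uh (fun _ => 0) = 0 := by
      funext x
      simp only [huh_def]
      rw [Transfer.dualFn_zero]
      simp
    have h0CH : (0 : (Fin d → ZMod N) → ℝ) ∈ closure (convexHull ℝ S₀) :=
      subset_closure (subset_convexHull ℝ S₀ (huh_zero ▸ ⟨_, hzeroST, rfl⟩))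
    have hmem : (u⁻¹ • ell) ∈ closure (convexHull ℝ S₀) := by
      by_contra hc
      obtain ⟨L₂, v, hL₂CH, hL₂pt⟩ := geometric_hahn_banach_closed_point
        ((convex_convexHull ℝ S₀).closure) isClosed_closure hc
      have hv0 : 0 < v := by simpa using hL₂CH 0 h0CH
      set b₀ : (Fin d → ZMod N) → ℝ := fun x => if x ∈ Ω then v⁻¹ * L₂ (bas x) else 0
        with hb₀_def
      have hb₀supp : ∀ x, x ∉ Ω → b₀ x = 0 := fun x hx => by
        rw [hb₀_def]
        simp [hx]
      have hb₀B : b₀ ∈ B := by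
        refine ⟨hb₀supp, fun h hh => ?_⟩
        have e2 : (∑ x, b₀ x * uh h x) = wInner ν b₀ (dualFn ν h) / lam := by
          simp only [huh_def]
          exact hpair b₀ (dualFn ν h)
        have e1 : L₂ (uh h) = ∑ x, uh h x * L₂ (bas x) := hexp L₂ (uh h)
        have e3 : (∑ x, b₀ x * uh h x) = v⁻¹ * L₂ (uh h) := by
          rw [e1, Finset.mul_sum]
          refine Finset.sum_congr rfl fun x _ => ?_
          by_cases hx : x ∈ Ω
          · rw [hb₀_def]
            simp only [if_pos hx]
            ring
          · have hD : dualFn ν h x = 0 := Transfer.dualFn_eq_zero_of_not_mem hface hh.1 hx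
            rw [hb₀supp x hx]
            simp only [huh_def, hD]
            simp
        have hL₂uh : L₂ (uh h) < v :=
          hL₂CH _ (subset_closure (subset_convexHull ℝ _ ⟨h, hh, rfl⟩))
        have e4 : wInner ν b₀ (dualFn ν h) = lam * (v⁻¹ * L₂ (uh h)) := by
          rw [← e3, e2]
          field_simp
        rw [e4]
        refine le_of_lt ?_
        calc lam * (v⁻¹ * L₂ (uh h)) < lam * (v⁻¹ * v) := by
              refine mul_lt_mul_of_pos_left ?_ hlam0
              exact mul_lt_mul_of_pos_left hL₂uh (inv_pos.2 hv0)
          _ = lam := by field_simp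
      have h1 : L b₀ < u := hLK b₀ (by simpa using Set.add_mem_add hzeroK₁ hb₀B)
      have h2 : L b₀ = v⁻¹ * ∑ x, ell x * L₂ (bas x) := by
        rw [hLsupp b₀ hb₀supp, Finset.mul_sum]
        refine Finset.sum_congr rfl fun x _ => ?_
        by_cases hx : x ∈ Ω
        · rw [hb₀_def, hell_def]
          simp only [if_pos hx]
          ring
        · rw [hb₀supp x hx, hell_def]
          simp [hx]
      have h4 : L₂ (u⁻¹ • ell) = u⁻¹ * ∑ x, ell x * L₂ (bas x) := by
        rw [map_smul, smul_eq_mul, hexp L₂ ell]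
      have hS : u * v < ∑ x, ell x * L₂ (bas x) := by
        have h3 : v < u⁻¹ * ∑ x, ell x * L₂ (bas x) := h4 ▸ hL₂pt
        calc u * v < u * (u⁻¹ * ∑ x, ell x * L₂ (bas x)) := mul_lt_mul_of_pos_left h3 hu0
          _ = ∑ x, ell x * L₂ (bas x) := by field_simp
      have h5 : u < L b₀ := by
        rw [h2]
        calc u = v⁻¹ * (u * v) := by
              rw [mul_comm u v, ← mul_assoc, inv_mul_cancel₀ hv0.ne', one_mul]
          _ < v⁻¹ * ∑ x, ell x * L₂ (bas x) := mul_lt_mul_of_pos_left hS (inv_pos.2 hv0)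
      linarith
    set G1 : ℝ := ∑ x, νd x with hG1_def
    have hG1_0 : 0 ≤ G1 := Finset.sum_nonneg fun x _ => hνd x
    set τ : ℝ := 1 / (8 * (G1 + 2 * cX + 1)) with hτ_def
    have hτ0 : 0 < τ := by
      rw [hτ_def]
      positivity
    obtain ⟨p, hpCH, hpd⟩ := Metric.mem_closure_iff.1 hmem τ hτ0
    rw [_root_.convexHull_eq] at hpCH
    obtain ⟨ι', t, wgt, z, hwgt0, hwgt1, hzS, hzC⟩ := hpCH
    have hHex : ∀ i : ι', ∃ h, (i ∈ t → (h ∈ STset Ω νd ∧ uh h = z i)) := by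
      intro i
      by_cases hi : i ∈ t
      · obtain ⟨h, hh, he⟩ := hzS i hi
        exact ⟨h, fun _ => ⟨hh, he⟩⟩
      · exact ⟨fun _ => 0, fun hcon => absurd hcon hi⟩
    choose H hH using hHex
    set Φ : (Fin d → ZMod N) → ℝ := fun x => ∑ i ∈ t, wgt i * dualFn ν (H i) x with hΦ_def
    have hp_eq : p = fun x => Transfer.wt ν x * Φ x / (lam * cX) := by
      rw [← hzC, Finset.centerMass_eq_of_sum_1 _ _ hwgt1]
      funext x
      calc (∑ i ∈ t, wgt i • z i) x = ∑ i ∈ t, wgt i * z i x := by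
            rw [Finset.sum_apply]
            exact Finset.sum_congr rfl fun i _ => by simp [smul_eq_mul]
        _ = ∑ i ∈ t, Transfer.wt ν x * (wgt i * dualFn ν (H i) x) / (lam * cX) := by
            refine Finset.sum_congr rfl fun i hi => ?_
            rw [← (hH i hi).2]
            simp only [huh_def]
            ring
        _ = Transfer.wt ν x * Φ x / (lam * cX) := by
            rw [hΦ_def, Finset.mul_sum, Finset.sum_div]
    have hΦbound : ∀ x, |Φ x| ≤ T := by
      intro x
      calc |Φ x| ≤ ∑ i ∈ t, |wgt i * dualFn ν (H i) x| := by
            rw [hΦ_def]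
            exact Finset.abs_sum_le_sum_abs _ _
        _ ≤ ∑ i ∈ t, wgt i * T := by
            refine Finset.sum_le_sum fun i hi => ?_
            rw [abs_mul, abs_of_nonneg (hwgt0 i hi)]
            refine mul_le_mul_of_nonneg_left ?_ (hwgt0 i hi)
            by_cases hx : x ∈ Ω
            · exact hyp1 (H i) ((hH i hi).1) x hx
            · rw [Transfer.dualFn_eq_zero_of_not_mem hface ((hH i hi).1).1 hx]
              simpa using hT0.le
        _ = T := by rw [← Finset.sum_mul, hwgt1, one_mul]
    have hΦsupp : ∀ x, x ∉ Ω → Φ x = 0 := by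
      intro x hx
      rw [hΦ_def]
      exact Finset.sum_eq_zero fun i hi => by
        rw [Transfer.dualFn_eq_zero_of_not_mem hface ((hH i hi).1).1 hx, mul_zero]
    have hdist : ∀ x, |u⁻¹ * ell x - p x| ≤ τ := by
      intro x
      have h1 : ‖(u⁻¹ • ell - p) x‖ ≤ ‖u⁻¹ • ell - p‖ := norm_le_pi_norm _ x
      have h2 : ‖u⁻¹ • ell - p‖ ≤ τ := by
        rw [← dist_eq_norm]
        exact hpd.le
      have h3 : (u⁻¹ • ell - p) x = u⁻¹ * ell x - p x := by simp [smul_eq_mul]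
      rw [h3, Real.norm_eq_abs] at h1
      linarith
    have happrox : ∀ a : (Fin d → ZMod N) → ℝ, (∀ x, x ∉ Ω → a x = 0) →
        |lam * L a - u * wInner ν a Φ| ≤ lam * u * τ * ∑ x, |a x| := by
      intro a ha
      have e2 : (∑ x, a x * p x) = wInner ν a Φ / lam := by
        rw [hp_eq]
        exact hpair a Φ
      have W_eq : wInner ν a Φ = lam * ∑ x, a x * p x := by
        rw [e2, mul_comm, div_mul_cancel₀ _ hlam0.ne']
      have e3 : lam * L a - u * wInner ν a Φ = lam * u * ∑ x, a x * (u⁻¹ * ell x - p x) := by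
        rw [hLsupp a ha, W_eq]
        simp only [Finset.mul_sum]
        rw [← Finset.sum_sub_distrib]
        refine Finset.sum_congr rfl fun x _ => ?_
        field_simp
      rw [e3, abs_mul, abs_of_nonneg (by positivity : (0:ℝ) ≤ lam * u)]
      have hbnd : |∑ x, a x * (u⁻¹ * ell x - p x)| ≤ τ * ∑ x, |a x| := by
        calc |∑ x, a x * (u⁻¹ * ell x - p x)| ≤ ∑ x, |a x * (u⁻¹ * ell x - p x)| :=
              Finset.abs_sum_le_sum_abs _ _
          _ ≤ ∑ x, |a x| * τ := by
              refine Finset.sum_le_sum fun x _ => ?_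
              rw [abs_mul]
              exact mul_le_mul_of_nonneg_left (hdist x) (abs_nonneg _)
          _ = τ * ∑ x, |a x| := by rw [← Finset.sum_mul, mul_comm]
      calc lam * u * |∑ x, a x * (u⁻¹ * ell x - p x)| ≤ lam * u * (τ * ∑ x, |a x|) :=
            mul_le_mul_of_nonneg_left hbnd (by positivity : (0:ℝ) ≤ lam * u)
        _ = lam * u * τ * ∑ x, |a x| := by ring
    have hg₀l1 : (∑ x, |g₀ x|) ≤ G1 := by
      rw [hG1_def]
      refine Finset.sum_le_sum fun x _ => ?_
      rw [abs_of_nonneg (hg₀bounds x).1]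
      exact (hg₀bounds x).2
    have hIneq1 : lam * (1 - τ * G1) < wInner ν g₀ Φ := by
      have h1 : u < L g₀ := hLg
      have h2 := (abs_le.1 (happrox g₀ hg₀supp)).2
      have h3 : lam * u * τ * (∑ x, |g₀ x|) ≤ lam * u * τ * G1 :=
        mul_le_mul_of_nonneg_left hg₀l1 (by positivity)
      have h4 : lam * u < lam * L g₀ := mul_lt_mul_of_pos_left h1 hlam0
      have h5 : u * (lam * (1 - τ * G1)) < u * wInner ν g₀ Φ := by nlinarith
      exact lt_of_mul_lt_mul_left h5 hu0.le
    set f₁s : (Fin d → ZMod N) → ℝ := fun x => if x ∈ Ω ∧ 0 < Φ x then 2 else 0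
      with hf₁s_def
    have hf₁smem : f₁s ∈ K₁ := by
      constructor
      · intro x
        by_cases hc : x ∈ Ω ∧ 0 < Φ x
        · rw [hf₁s_def]
          simp only [if_pos hc]
          norm_num
        · rw [hf₁s_def]
          simp only [if_neg hc]
          norm_num
      · intro x hx
        rw [hf₁s_def]
        simp only [if_neg (fun hc : _ ∧ _ => hx hc.1)]
    have hf₁ssupp : ∀ x, x ∉ Ω → f₁s x = 0 := hf₁smem.2
    have hf₁sl1 : (∑ x, |f₁s x|) ≤ 2 * cX := by
      calc (∑ x, |f₁s x|) ≤ ∑ _x : Fin d → ZMod N, (2:ℝ) := by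
            refine Finset.sum_le_sum fun x _ => ?_
            by_cases hc : x ∈ Ω ∧ 0 < Φ x
            · rw [hf₁s_def]
              simp only [if_pos hc]
              norm_num
            · rw [hf₁s_def]
              simp only [if_neg hc]
              norm_num
        _ = 2 * cX := by
            rw [Finset.sum_const, card_univ, nsmul_eq_mul, hcX_def]
            ring
    have hIneq2 : wInner ν f₁s Φ < lam * (1 + τ * (2 * cX)) := by
      have h1 : L f₁s < u := hLK f₁s (by simpa using Set.add_mem_add hf₁smem hzeroB)
      have h2 := (abs_le.1 (happrox f₁s hf₁ssupp)).1
      have h3 : lam * u * τ * (∑ x, |f₁s x|) ≤ lam * u * τ * (2 * cX) :=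
        mul_le_mul_of_nonneg_left hf₁sl1 (by positivity)
      have h4 : lam * L f₁s < lam * u := mul_lt_mul_of_pos_left h1 hlam0
      have h5 : u * wInner ν f₁s Φ < u * (lam * (1 + τ * (2 * cX))) := by nlinarith
      exact lt_of_mul_lt_mul_left h5 hu0.le
    set Φp : (Fin d → ZMod N) → ℝ := fun x => max (Φ x) 0 with hΦp_def
    have hWf₁s : wInner ν f₁s Φ = 2 * wInner ν (fun _ => 1) Φp := by
      rw [← Transfer.wInner_smul_right 2 (fun _ => (1:ℝ)) Φp]
      refine Transfer.wInner_congr fun x => ?_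
      by_cases hc : x ∈ Ω ∧ 0 < Φ x
      · rw [hf₁s_def, hΦp_def]
        simp only [if_pos hc]
        rw [max_eq_left hc.2.le]
        ring
      · rw [hf₁s_def, hΦp_def]
        simp only [if_neg hc]
        by_cases hx : x ∈ Ω
        · have hφ : ¬ 0 < Φ x := fun hcon => hc ⟨hx, hcon⟩
          push_neg at hφ
          rw [max_eq_right hφ]
          ring
        · rw [hΦsupp x hx]
          norm_num
    have hstep1 : wInner ν (fun _ => 1) Φp < lam * (1 + τ * (2 * cX)) / 2 := by
      linarith [hIneq2, hWf₁s]
    have hstep2 : wInner ν g₀ Φ ≤ wInner ν νd Φp := by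
      refine Transfer.wInner_mono hν fun x => ?_
      by_cases hφ : 0 < Φ x
      · have e : Φp x = Φ x := by
          rw [hΦp_def]
          exact max_eq_left hφ.le
        rw [e]
        exact mul_le_mul_of_nonneg_right (hg₀bounds x).2 hφ.le
      · push_neg at hφ
        have h1 : g₀ x * Φ x ≤ 0 := mul_nonpos_of_nonneg_of_nonpos (hg₀bounds x).1 hφ
        have h2 : 0 ≤ νd x * Φp x := mul_nonneg (hνd x) (le_max_right _ _)
        linarith
    have hsplit : wInner ν νd Φp = wInner ν (fun _ => 1) Φp +
        wInner ν (fun x => νd x - 1) Φp := by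
      have h1 : wInner ν Φp (fun x => (1:ℝ) + (νd x - 1)) =
          wInner ν Φp (fun _ => 1) + wInner ν Φp (fun x => νd x - 1) :=
        Transfer.wInner_add_right Φp (fun _ => 1) (fun x => νd x - 1)
      have h2 : wInner ν νd Φp = wInner ν Φp (fun x => (1:ℝ) + (νd x - 1)) := by
        rw [Transfer.wInner_comm]
        exact Transfer.wInner_congr fun x => by ring
      rw [h2, h1, Transfer.wInner_comm Φp, Transfer.wInner_comm Φp]
    have hyp2' : ∀ (k : ℕ) (g : Fin k → ((Fin d → ZMod N) → ℝ)), (∀ j, g j ∈ STset Ω νd) →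
        |wInner ν (fun x => νd x - 1) (fun x => ∏ j, dualFn ν (g j) x)| ≤ Cm k * ε := by
      intro k g hg
      have hsc : boxNorm ν (fun x => ε⁻¹ * (νd x - 1)) ≤ 1 := by
        rw [Transfer.boxNorm_smul (inv_nonneg.2 hε0.le)]
        calc ε⁻¹ * boxNorm ν (fun x => νd x - 1) ≤ ε⁻¹ * ε :=
              mul_le_mul_of_nonneg_left hbox (inv_nonneg.2 hε0.le)
          _ = 1 := inv_mul_cancel₀ hε0.ne'
      have h2 := hyp2 k g hg _ hsc
      rw [Transfer.wInner_smul_right] at h2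
      rw [abs_mul, abs_inv, abs_of_nonneg hε0.le] at h2
      rw [Transfer.wInner_comm]
      calc |wInner ν (fun x => ∏ j, dualFn ν (g j) x) (fun x => νd x - 1)|
          = ε * (ε⁻¹ * |wInner ν (fun x => ∏ j, dualFn ν (g j) x) (fun x => νd x - 1)|) := by
            field_simp
        _ ≤ ε * Cm k := mul_le_mul_of_nonneg_left h2 hε0.le
        _ = Cm k * ε := mul_comm _ _
    have hmulti : ∀ k : ℕ, |wInner ν (fun x => νd x - 1) (fun x => Φ x ^ k)| ≤ Cm k * ε := by
      intro k
      have hexpand : (fun x => Φ x ^ k) = fun x => ∑ pp ∈ Fintype.piFinset (fun _ : Fin k => t),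
          (∏ j, wgt (pp j)) * ∏ j, dualFn ν (H (pp j)) x := by
        funext x
        rw [hΦ_def]
        calc (∑ i ∈ t, wgt i * dualFn ν (H i) x) ^ k
            = ∏ _j : Fin k, (∑ i ∈ t, wgt i * dualFn ν (H i) x) := by
              rw [Finset.prod_const, card_univ, Fintype.card_fin]
          _ = ∑ pp ∈ Fintype.piFinset (fun _ : Fin k => t),
              ∏ j, (wgt (pp j) * dualFn ν (H (pp j)) x) := Finset.prod_univ_sum _ _
          _ = ∑ pp ∈ Fintype.piFinset (fun _ : Fin k => t),
              (∏ j, wgt (pp j)) * ∏ j, dualFn ν (H (pp j)) x :=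
              Finset.sum_congr rfl fun pp _ => Finset.prod_mul_distrib
      rw [hexpand, Transfer.wInner_sum_right (Fintype.piFinset (fun _ : Fin k => t))
        (fun pp => fun x => (∏ j, wgt (pp j)) * ∏ j, dualFn ν (H (pp j)) x)
        (fun x => νd x - 1)]
      have hterm : ∀ pp ∈ Fintype.piFinset (fun _ : Fin k => t),
          |wInner ν (fun x => νd x - 1)
            (fun x => (∏ j, wgt (pp j)) * ∏ j, dualFn ν (H (pp j)) x)| ≤
            (∏ j, wgt (pp j)) * (Cm k * ε) := by
        intro pp hpp
        have hmempp : ∀ j, pp j ∈ t := fun j => (Fintype.mem_piFinset.1 hpp) j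
        have hc0 : (0:ℝ) ≤ ∏ j, wgt (pp j) :=
          Finset.prod_nonneg fun j _ => hwgt0 _ (hmempp j)
        rw [Transfer.wInner_smul_right (∏ j, wgt (pp j)) _
          (fun x => ∏ j, dualFn ν (H (pp j)) x)]
        rw [abs_mul, abs_of_nonneg hc0]
        exact mul_le_mul_of_nonneg_left
          (hyp2' k (fun j => H (pp j)) (fun j => (hH _ (hmempp j)).1)) hc0
      have hwsum : (∑ pp ∈ Fintype.piFinset (fun _ : Fin k => t), ∏ j, wgt (pp j)) = 1 := by
        rw [← Finset.prod_univ_sum]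
        simp [hwgt1]
      calc |∑ pp ∈ Fintype.piFinset (fun _ : Fin k => t), wInner ν (fun x => νd x - 1)
            (fun x => (∏ j, wgt (pp j)) * ∏ j, dualFn ν (H (pp j)) x)|
          ≤ ∑ pp ∈ Fintype.piFinset (fun _ : Fin k => t), |wInner ν (fun x => νd x - 1)
            (fun x => (∏ j, wgt (pp j)) * ∏ j, dualFn ν (H (pp j)) x)| :=
            Finset.abs_sum_le_sum_abs _ _
        _ ≤ ∑ pp ∈ Fintype.piFinset (fun _ : Fin k => t),
            (∏ j, wgt (pp j)) * (Cm k * ε) := Finset.sum_le_sum hterm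
        _ = (∑ pp ∈ Fintype.piFinset (fun _ : Fin k => t), ∏ j, wgt (pp j)) * (Cm k * ε) := by
            rw [← Finset.sum_mul]
        _ = Cm k * ε := by rw [hwsum, one_mul]
    have hQbound : |wInner ν (fun x => νd x - 1) (fun x => Q.eval (Φ x))| ≤ A * ε := by
      have he : (fun x => Q.eval (Φ x)) =
          fun x => ∑ k ∈ Finset.range (Q.natDegree + 1), Q.coeff k * Φ x ^ k := by
        funext x
        rw [Polynomial.eval_eq_sum_range]
      rw [he, Transfer.wInner_sum_right (Finset.range (Q.natDegree + 1))
        (fun k => fun x => Q.coeff k * Φ x ^ k) (fun x => νd x - 1)]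
      calc |∑ k ∈ Finset.range (Q.natDegree + 1),
            wInner ν (fun x => νd x - 1) (fun x => Q.coeff k * Φ x ^ k)|
          ≤ ∑ k ∈ Finset.range (Q.natDegree + 1),
            |wInner ν (fun x => νd x - 1) (fun x => Q.coeff k * Φ x ^ k)| :=
            Finset.abs_sum_le_sum_abs _ _
        _ ≤ ∑ k ∈ Finset.range (Q.natDegree + 1), |Q.coeff k| * (Cm k * ε) := by
            refine Finset.sum_le_sum fun k _ => ?_
            rw [Transfer.wInner_smul_right (Q.coeff k) _ (fun x => Φ x ^ k), abs_mul]
            exact mul_le_mul_of_nonneg_left (hmulti k) (abs_nonneg _)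
        _ = A * ε := by
            rw [hA_def, Finset.sum_mul]
            exact Finset.sum_congr rfl fun k _ => by ring
    have hstep3 : wInner ν (fun x => νd x - 1) Φp ≤ A * ε + lam / 24 * 3 := by
      have hpt : ∀ x, (νd x - 1) * Φp x ≤
          ((νd x - 1) * Q.eval (Φ x) + (νd x + 1) * (lam / 24)) * 1 := by
        intro x
        have h1 : |Φp x - Q.eval (Φ x)| ≤ lam / 24 := by
          have h := hQ (Φ x) (hΦbound x)
          rw [abs_sub_comm] at h
          simpa [hΦp_def] using h
        have h2 : |νd x - 1| ≤ νd x + 1 := by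
          rw [abs_le]
          constructor <;> linarith [hνd x]
        have h3 : (νd x - 1) * (Φp x - Q.eval (Φ x)) ≤ (νd x + 1) * (lam / 24) := by
          calc (νd x - 1) * (Φp x - Q.eval (Φ x)) ≤ |(νd x - 1) * (Φp x - Q.eval (Φ x))| :=
                le_abs_self _
            _ = |νd x - 1| * |Φp x - Q.eval (Φ x)| := abs_mul _ _
            _ ≤ (νd x + 1) * (lam / 24) :=
                mul_le_mul h2 h1 (abs_nonneg _) (by linarith [hνd x])
        nlinarith [h3]
      have hm := Transfer.wInner_mono hν hpt
      have hsplit2 : wInner ν (fun x => (νd x - 1) * Q.eval (Φ x) + (νd x + 1) * (lam / 24))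
          (fun _ => 1) = wInner ν (fun x => νd x - 1) (fun x => Q.eval (Φ x)) +
            lam / 24 * (wInner ν νd (fun _ => 1) + wInner ν (fun _ => 1) (fun _ => 1)) := by
        simp only [Transfer.wInner_def]
        rw [← Finset.expect_add_distrib, Finset.mul_expect, ← Finset.expect_add_distrib]
        refine Finset.expect_congr rfl fun x _ => ?_
        ring
      have hbound23 : wInner ν νd (fun _ => 1) + wInner ν (fun _ => 1) (fun _ => 1) ≤ 3 := by
        linarith [hint1, hint2, hεhalf]
      have hq := le_trans (le_abs_self _) hQbound
      have h24 : (0:ℝ) ≤ lam / 24 := by positivity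
      calc wInner ν (fun x => νd x - 1) Φp
          ≤ wInner ν (fun x => (νd x - 1) * Q.eval (Φ x) + (νd x + 1) * (lam / 24))
            (fun _ => 1) := hm
        _ = wInner ν (fun x => νd x - 1) (fun x => Q.eval (Φ x)) +
            lam / 24 * (wInner ν νd (fun _ => 1) + wInner ν (fun _ => 1) (fun _ => 1)) :=
            hsplit2
        _ ≤ A * ε + lam / 24 * 3 := by
            have := mul_le_mul_of_nonneg_left hbound23 h24
            linarith [hq]
    have hτG : τ * (G1 + cX) ≤ 1 / 8 := by
      rw [hτ_def, div_mul_eq_mul_div, one_mul, div_le_div_iff₀ (by positivity) (by norm_num)]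
      nlinarith [hG1_0, hcX0.le]
    have hchain : lam * (1 - τ * G1) < lam * (1 + τ * (2 * cX)) / 2 + (A * ε + lam / 24 * 3) := by
      linarith [hIneq1, hstep2, hsplit, hstep1, hstep3]
    have h8 : lam * (τ * (G1 + cX)) ≤ lam * (1 / 8) := mul_le_mul_of_nonneg_left hτG hlam0.le
    nlinarith [hchain, hεA, h8, hlam0]

end
end
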